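/- For every finite directed graph G with letter-labeled vertices, the configuration pairing vanishes on anti-commutativity and Jacobi combinations of Lie bracket expressions: ⟨G, [H,K]⟩ + ⟨G, [K,H]⟩ = 0 and ⟨G, [H,[K,M]]⟩ + ⟨G, [M,[H,K]]⟩ + ⟨G, [K,[M,H]]⟩ = 0 for all Lie bracket expressions H, K, M in letters of the alphabet; consequently, for each graph G the configuration pairing ⟨G, −⟩ induces a well-defined linear functional on the free Lie algebra on the alphabet. -/

import Mathlib

open scoped Classical

/-- A word `w` over a totally ordered alphabet is a Lyndon-Shirshov word if it is nonempty and
lexicographically strictly less than every word obtained from it by a nontrivial cyclic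
permutation (moving a nonempty proper prefix to the end). -/
def IsLyndon {A : Type*} [LinearOrder A] (w : List A) : Prop :=
  w ≠ [] ∧ ∀ u v : List A, u ≠ [] → v ≠ [] → w = u ++ v → w < v ++ u

/-- Lie bracket expressions in letters from `A`: the free magma on `A`. -/
inductive LieExpr (A : Type*) : Type _
  | of : A → LieExpr A
  | br : LieExpr A → LieExpr A → LieExpr A

namespace LieExpr

variable {A : Type*}

/-- The list of letters of a Lie bracket expression (its positions, read left to right). -/
def letters : LieExpr A → List A
  | of a => [a]
  | br h k => h.letters ++ k.letters

/-- The number of positions of a Lie bracket expression. -/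
def size : LieExpr A → ℕ
  | of _ => 1
  | br h k => h.size + k.size

/-- For each sub-bracket `[H,K]` of the expression (placed at offset `i`), the pair of
position intervals (recorded as `(start, length)`) occupied by `H` and by `K`. -/
def intervals : LieExpr A → ℕ → List ((ℕ × ℕ) × (ℕ × ℕ))
  | of _, _ => []
  | br h k, i =>
      ((i, h.size), (i + h.size, k.size)) :: (h.intervals i ++ k.intervals (i + h.size))

/-- `iterBr L n K = [L,[L,…,[L,K]…]]` with `n` copies of `L`. -/
def iterBr (L : LieExpr A) : ℕ → LieExpr A → LieExpr A
  | 0, K => K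
  | n + 1, K => br L (iterBr L n K)

end LieExpr

/-- A finite directed graph with vertices labeled by letters from `A`. -/
structure LGraph (A : Type*) where
  V : Type
  [instFintype : Fintype V]
  [instDecEq : DecidableEq V]
  edges : Finset (V × V)
  label : V → A

attribute [instance] LGraph.instFintype LGraph.instDecEq

namespace LGraph

variable {A : Type*}

/-- The full subgraph of `G` on the vertex set `S` is connected: `S` is nonempty and any two
vertices of `S` are joined by a path of edges of `G` lying inside `S` (ignoring directions). -/
def ConnOn (G : LGraph A) (S : Finset G.V) : Prop :=
  S.Nonempty ∧ ∀ x ∈ S, ∀ y ∈ S,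
    Relation.ReflTransGen (fun u v => u ∈ S ∧ v ∈ S ∧ ((u, v) ∈ G.edges ∨ (v, u) ∈ G.edges)) x y

/-- The edges of `G` joining the vertex sets `S` and `T` (in either direction). -/
def between (G : LGraph A) (S T : Finset G.V) : Finset (G.V × G.V) :=
  G.edges.filter fun e => (e.1 ∈ S ∧ e.2 ∈ T) ∨ (e.1 ∈ T ∧ e.2 ∈ S)

end LGraph

section Pairing

variable {A : Type*}

/-- The set of vertices sent by `σ` to positions in the interval `[st, st + len)`. -/
def posSet (G : LGraph A) {m : ℕ} (σ : G.V ≃ Fin m) (st len : ℕ) : Finset G.V :=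
  Finset.univ.filter fun v => st ≤ (σ v : ℕ) ∧ (σ v : ℕ) < st + len

/-- The condition for the `σ`-configuration pairing to be nonzero: for every sub-bracket
`[H,K]` of `L`, the full subgraphs of `G` on `σ⁻¹H` and on `σ⁻¹K` are both connected and
there is exactly one edge of `G` between them. -/
def Good (G : LGraph A) (L : LieExpr A) (σ : G.V ≃ Fin L.letters.length) : Prop :=
  ∀ q ∈ L.intervals 0,
    G.ConnOn (posSet G σ q.1.1 q.1.2) ∧ G.ConnOn (posSet G σ q.2.1 q.2.2) ∧
      (G.between (posSet G σ q.1.1 q.1.2) (posSet G σ q.2.1 q.2.2)).card = 1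

/-- The `σ`-configuration pairing `⟨G, L⟩_σ`: zero unless `σ` is good, and otherwise `(-1)ⁿ`
where `n` is the number of edges of `G` pointing (under `σ`) from right to left in `L`. -/
noncomputable def pairingAt (G : LGraph A) (L : LieExpr A)
    (σ : G.V ≃ Fin L.letters.length) : ℤ :=
  if Good G L σ then
    (-1 : ℤ) ^ (G.edges.filter fun e => (σ e.2 : ℕ) < (σ e.1 : ℕ)).card
  else 0

/-- The finite set of label-preserving bijections from the vertices of `G` to the
positions of `L`. -/
noncomputable def Bijections (G : LGraph A) (L : LieExpr A) :
    Finset (G.V ≃ Fin L.letters.length) :=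
  Finset.univ.filter fun σ => ∀ v, G.label v = L.letters.get (σ v)

/-- The configuration pairing `⟨G, L⟩`: the sum of `⟨G, L⟩_σ` over all label-preserving
bijections `σ`. -/
noncomputable def pairing (G : LGraph A) (L : LieExpr A) : ℤ :=
  ∑ σ ∈ Bijections G L, pairingAt G L σ

end Pairing

/-- Trees recording the nested structure of a fully partitioned word: a fully partitioned
word is either a single letter or `αⁿχ` (`n ≥ 1`) where `α` and `χ` are fully partitioned. -/
inductive FP (A : Type*) : Type _
  | letter : A → FP A
  | node : FP A → ℕ → FP A → FP A

namespace FP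

variable {A : Type*}

/-- The underlying word of a fully-partitioned-word tree. -/
def word : FP A → List A
  | letter x => [x]
  | node α n χ => (List.replicate n α.word).flatten ++ χ.word

/-- `IsBlock b t`: `t` is (the tree of) a valid block of the level for which `b` is the base
(i.e. `b` is the first block of the previous level): either `t = bʲu` with `j ≥ 1` and `u` a
block of the previous level, `u ≠ b`; or (collapsed case, `j = 0`) `t` is itself a block of
the previous level different from `b`. -/
def IsBlock : FP A → FP A → Prop
  | letter a, t =>
      (∃ j x, 1 ≤ j ∧ t = node (letter a) j (letter x) ∧ x ≠ a) ∨
      (∃ x, t = letter x ∧ x ≠ a)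
  | node c m v, t =>
      (∃ j u, 1 ≤ j ∧ t = node (node c m v) j u ∧ IsBlock c u ∧ u ≠ node c m v) ∨
      (IsBlock c t ∧ t ≠ node c m v)

/-- `IsBlockUnder b u` : `u` is a block of the level of `b` itself (a single letter when `b`
is a letter, and a block over the base of `b` otherwise). -/
def IsBlockUnder : FP A → FP A → Prop
  | letter _, u => ∃ x, u = letter x
  | node c _ _, u => IsBlock c u

/-- `t.Valid`: `t` is the tree of nested simple partitions of a word which fully partitions:
each node is `αⁿχ` with `n ≥ 1`, where `α` (the base, i.e. the first block of its level) is
itself valid, and `χ` is a block of the same level as `α` with `χ ≠ α`. -/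
def Valid : FP A → Prop
  | letter _ => True
  | node c m v => Valid c ∧ 1 ≤ m ∧ IsBlockUnder c v ∧ v ≠ c

/-- The left-greedy bracketing `⌊w⌋` of a fully partitioned word:
`⌊x⌋ = x`, and `⌊αⁿχ⌋ = [⌊α⌋,[⌊α⌋,…,[⌊α⌋,⌊χ⌋]…]]`. -/
def bracket : FP A → LieExpr A
  | letter x => .of x
  | node α n χ => LieExpr.iterBr α.bracket n χ.bracket

end FP

/-- A finite directed labeled graph with a distinguished anchor vertex. -/
structure AGraph (A : Type*) extends LGraph A where
  anchor : V

namespace FP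

variable {A : Type*}

/-- The star graph `★(w)` of a fully partitioned word: `★(x)` is a single anchor vertex
labeled `x`; `★(αⁿχ)` consists of `n` disjoint copies of `★(α)` and one copy of `★(χ)`,
with an edge from the anchor of each copy of `★(α)` to the anchor of `★(χ)`, which is the
anchor of the whole graph. -/
def star : FP A → AGraph A
  | letter x => { V := PUnit, edges := ∅, label := fun _ => x, anchor := PUnit.unit }
  | node α n χ =>
      let Gα := star α
      let Gχ := star χ
      { V := (Fin n × Gα.V) ⊕ Gχ.V
        edges :=
          ((Finset.univ ×ˢ Gα.edges).image fun p =>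
              (Sum.inl (p.1, p.2.1), Sum.inl (p.1, p.2.2))) ∪
          (Gχ.edges.image fun e => (Sum.inr e.1, Sum.inr e.2)) ∪
          (Finset.univ.image fun k : Fin n => (Sum.inl (k, Gα.anchor), Sum.inr Gχ.anchor))
        label := Sum.elim (fun p => Gα.label p.2) Gχ.label
        anchor := Sum.inr Gχ.anchor }

end FP

/-- Interpretation of a Lie bracket expression in the free Lie algebra over `ℚ`. -/
noncomputable def LieExpr.toLie {A : Type*} : LieExpr A → FreeLieAlgebra ℚ A
  | .of a => FreeLieAlgebra.of ℚ a
  | .br h k => ⁅h.toLie, k.toLie⁆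
namespace CP

open LieExpr Finset

variable {A : Type*}

lemma letters_length (X : LieExpr A) : X.letters.length = X.size := by
  induction X with
  | of a => rfl
  | br h k ih1 ih2 => simp [LieExpr.letters, LieExpr.size, ih1, ih2]

lemma size_br (X Y : LieExpr A) : (LieExpr.br X Y).size = X.size + Y.size := rfl

lemma intervals_bounds (X : LieExpr A) :
    ∀ j, ∀ q ∈ X.intervals j,
      (j ≤ q.1.1 ∧ q.1.1 + q.1.2 ≤ j + X.size) ∧ (j ≤ q.2.1 ∧ q.2.1 + q.2.2 ≤ j + X.size) := by
  induction X with
  | of a => intro j q hq; simp [LieExpr.intervals] at hq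
  | br h k ih1 ih2 =>
    intro j q hq
    simp only [LieExpr.intervals, List.mem_cons, List.mem_append] at hq
    rcases hq with rfl | hq | hq
    · simp only [size_br]; omega
    · have := ih1 j q hq; simp only [size_br]; omega
    · have := ih2 (j + h.size) q hq; simp only [size_br]; omega

/-- the interval `[st, st+len)` either contains `[s, s+n)` or is disjoint from it. -/
def OkItv (s n st len : ℕ) : Prop :=
  st + len ≤ s ∨ s + n ≤ st ∨ (st ≤ s ∧ s + n ≤ st + len)

def shiftQ (d : ℕ) (q : (ℕ × ℕ) × (ℕ × ℕ)) : (ℕ × ℕ) × (ℕ × ℕ) :=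
  ((q.1.1 + d, q.1.2), (q.2.1 + d, q.2.2))

lemma intervals_shift (X : LieExpr A) :
    ∀ j d, X.intervals (j + d) = (X.intervals j).map (shiftQ d) := by
  induction X with
  | of a => intro j d; rfl
  | br h k ih1 ih2 =>
    intro j d
    simp only [LieExpr.intervals, List.map_cons, List.map_append]
    rw [show j + d + h.size = (j + h.size) + d from by omega, ih1, ih2]
    simp only [shiftQ]

/-- Contexts: Lie bracket expressions with a hole. -/
inductive Ctx (A : Type*) : Type _
  | hole : Ctx A
  | brL : Ctx A → LieExpr A → Ctx A
  | brR : LieExpr A → Ctx A → Ctx A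

namespace Ctx

def plug : Ctx A → LieExpr A → LieExpr A
  | hole, E => E
  | brL C R, E => .br (C.plug E) R
  | brR L C, E => .br L (C.plug E)

def comp : Ctx A → Ctx A → Ctx A
  | hole, D => D
  | brL C R, D => brL (C.comp D) R
  | brR L C, D => brR L (C.comp D)

lemma plug_comp (C D : Ctx A) (E : LieExpr A) : (C.comp D).plug E = C.plug (D.plug E) := by
  induction C with
  | hole => rfl
  | brL C R ih => simp [comp, plug, ih]
  | brR L C ih => simp [comp, plug, ih]

def csize : Ctx A → ℕ
  | hole => 0
  | brL C R => C.csize + R.size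
  | brR L C => L.size + C.csize

def off : Ctx A → ℕ
  | hole => 0
  | brL C _ => C.off
  | brR L C => L.size + C.off

lemma off_le_csize (C : Ctx A) : C.off ≤ C.csize := by
  induction C with
  | hole => exact le_refl _
  | brL C R ih => simp [off, csize]; omega
  | brR L C ih => simp [off, csize]; omega

def pre : Ctx A → List A
  | hole => []
  | brL C _ => C.pre
  | brR L C => L.letters ++ C.pre

def suf : Ctx A → List A
  | hole => []
  | brL C R => C.suf ++ R.letters
  | brR _ C => C.suf

lemma plug_letters (C : Ctx A) (E : LieExpr A) :
    (C.plug E).letters = C.pre ++ E.letters ++ C.suf := by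
  induction C with
  | hole => simp [plug, pre, suf]
  | brL C R ih => simp [plug, pre, suf, LieExpr.letters, ih]
  | brR L C ih => simp [plug, pre, suf, LieExpr.letters, ih]

lemma pre_length (C : Ctx A) : C.pre.length = C.off := by
  induction C with
  | hole => rfl
  | brL C R ih => simpa [pre, off] using ih
  | brR L C ih => simp [pre, off, letters_length, ih]

lemma size_plug (C : Ctx A) (E : LieExpr A) : (C.plug E).size = C.csize + E.size := by
  induction C with
  | hole => simp [plug, csize]
  | brL C R ih => simp [plug, csize, size_br, ih]; omega
  | brR L C ih => simp [plug, csize, size_br, ih]; omega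

def ctxIntervals : Ctx A → ℕ → ℕ → List ((ℕ × ℕ) × (ℕ × ℕ))
  | hole, _, _ => []
  | brL C R, n, i =>
      ((i, C.csize + n), (i + (C.csize + n), R.size)) ::
        (ctxIntervals C n i ++ R.intervals (i + (C.csize + n)))
  | brR L C, n, i =>
      ((i, L.size), (i + L.size, C.csize + n)) ::
        (L.intervals i ++ ctxIntervals C n (i + L.size))

lemma mem_intervals_plug (C : Ctx A) (E : LieExpr A) (i : ℕ) (q : (ℕ × ℕ) × (ℕ × ℕ)) :
    q ∈ (C.plug E).intervals i ↔
      q ∈ ctxIntervals C E.size i ∨ q ∈ E.intervals (i + C.off) := by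
  induction C generalizing i with
  | hole => simp [plug, ctxIntervals, off]
  | brL C R ih =>
      simp only [plug, LieExpr.intervals, ctxIntervals, size_plug, List.mem_cons,
        List.mem_append, ih, off]
      tauto
  | brR L C ih =>
      simp only [plug, LieExpr.intervals, ctxIntervals, size_plug, List.mem_cons,
        List.mem_append, ih, off]
      rw [show i + (L.size + C.off) = i + L.size + C.off from by omega]
      tauto

lemma ctxIntervals_ok (C : Ctx A) (n : ℕ) :
    ∀ i, ∀ q ∈ ctxIntervals C n i,
      OkItv (i + C.off) n q.1.1 q.1.2 ∧ OkItv (i + C.off) n q.2.1 q.2.2 := by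
  induction C with
  | hole => intro i q hq; simp [ctxIntervals] at hq
  | brL C R ih =>
      intro i q hq
      have hoc := off_le_csize C
      simp only [ctxIntervals, List.mem_cons, List.mem_append] at hq
      rcases hq with rfl | hq | hq
      · simp only [OkItv, off]; omega
      · have := ih i q hq; simp only [OkItv, off] at *; omega
      · have := intervals_bounds R _ q hq; simp only [OkItv, off]; omega
  | brR L C ih =>
      intro i q hq
      have hoc := off_le_csize C
      simp only [ctxIntervals, List.mem_cons, List.mem_append] at hq
      rcases hq with rfl | hq | hq
      · simp only [OkItv, off]; omega
      · have := intervals_bounds L _ q hq; simp only [OkItv, off]; omega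
      · have := ih (i + L.size) q hq; simp only [OkItv, off] at *; omega

end Ctx

end CP
namespace CP

open LieExpr Finset

variable {A : Type*}

/-! ### The block-swap permutation -/

def swapFun (s a b x : ℕ) : ℕ :=
  if s ≤ x ∧ x < s + a then x + b
  else if s + a ≤ x ∧ x < s + a + b then x - a
  else x

lemma swapFun_lt {s a b N : ℕ} (h : s + a + b ≤ N) {x : ℕ} (hx : x < N) :
    swapFun s a b x < N := by
  unfold swapFun; split_ifs <;> omega

lemma swapFun_inv {s a b : ℕ} (x : ℕ) : swapFun s b a (swapFun s a b x) = x := by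
  simp only [swapFun]
  split_ifs <;> omega

def swapEquiv (s a b N N' : ℕ) (hN : N' = N) (hle : s + a + b ≤ N) : Fin N ≃ Fin N' where
  toFun x := ⟨swapFun s a b x, hN ▸ swapFun_lt hle x.2⟩
  invFun y := ⟨swapFun s b a y, swapFun_lt (by omega) (hN ▸ y.2)⟩
  left_inv x := by ext; exact swapFun_inv x
  right_inv y := by ext; exact swapFun_inv y

@[simp] lemma swapEquiv_coe {s a b N N' : ℕ} {hN : N' = N} {hle : s + a + b ≤ N} (x : Fin N) :
    ((swapEquiv s a b N N' hN hle) x : ℕ) = swapFun s a b x := rfl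

/-! ### posSet transformation lemmas -/

lemma posSet_trans {G : LGraph A} {N N' : ℕ} (σ : G.V ≃ Fin N) (π : Fin N ≃ Fin N')
    {st len st' len' : ℕ}
    (h : ∀ x : Fin N,
      (st ≤ (π x : ℕ) ∧ (π x : ℕ) < st + len) ↔ (st' ≤ (x : ℕ) ∧ (x : ℕ) < st' + len')) :
    posSet G (σ.trans π) st len = posSet G σ st' len' := by
  ext v
  simp only [posSet, Finset.mem_filter, Finset.mem_univ, true_and, Equiv.trans_apply]
  exact (Finset.mem_filter.trans (and_iff_right (Finset.mem_univ _))).trans (h (σ v))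

section Swap

variable {G : LGraph A} {s a b N N' : ℕ} {hN : N' = N} {hle : s + a + b ≤ N}

lemma posSet_swap_ok (σ : G.V ≃ Fin N) {st len : ℕ}
    (hok : OkItv s (a + b) st len) :
    posSet G (σ.trans (swapEquiv s a b N N' hN hle)) st len = posSet G σ st len := by
  refine posSet_trans σ _ fun x => ?_
  have hx : (x : ℕ) < N := x.2
  simp only [swapEquiv_coe]
  rcases hok with h | h | h <;> (unfold swapFun; split_ifs <;> omega)

lemma posSet_swap_B (σ : G.V ≃ Fin N) {st len st' : ℕ}
    (h1 : s ≤ st) (h2 : st + len ≤ s + b) (h3 : st' = st + a) :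
    posSet G (σ.trans (swapEquiv s a b N N' hN hle)) st len = posSet G σ st' len := by
  refine posSet_trans σ _ fun x => ?_
  have hx : (x : ℕ) < N := x.2
  simp only [swapEquiv_coe]
  unfold swapFun; split_ifs <;> omega

lemma posSet_swap_A (σ : G.V ≃ Fin N) {st len st' : ℕ}
    (h1 : s + b ≤ st) (h2 : st + len ≤ s + a + b) (h3 : st' + b = st) :
    posSet G (σ.trans (swapEquiv s a b N N' hN hle)) st len = posSet G σ st' len := by
  refine posSet_trans σ _ fun x => ?_
  have hx : (x : ℕ) < N := x.2
  simp only [swapEquiv_coe]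
  unfold swapFun; split_ifs <;> omega

end Swap

/-! ### between / connectivity lemmas -/

lemma between_comm (G : LGraph A) (S T : Finset G.V) : G.between S T = G.between T S := by
  unfold LGraph.between
  exact Finset.filter_congr fun e _ => by tauto

lemma posSet_union (G : LGraph A) {N : ℕ} (σ : G.V ≃ Fin N) (st l₁ l₂ : ℕ) :
    posSet G σ st (l₁ + l₂) = posSet G σ st l₁ ∪ posSet G σ (st + l₁) l₂ := by
  ext v
  simp only [posSet, Finset.mem_filter, Finset.mem_univ, true_and, Finset.mem_union]
  omega

lemma posSet_disjoint (G : LGraph A) {N : ℕ} (σ : G.V ≃ Fin N) {st len st' len' : ℕ}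
    (h : st + len ≤ st') :
    Disjoint (posSet G σ st len) (posSet G σ st' len') := by
  rw [Finset.disjoint_left]
  intro v hv hv'
  simp only [posSet, Finset.mem_filter, Finset.mem_univ, true_and] at hv hv'
  omega

lemma between_union_right (G : LGraph A) {S T₁ T₂ : Finset G.V}
    (h1 : Disjoint S T₁) (h2 : Disjoint S T₂) (h3 : Disjoint T₁ T₂) :
    (G.between S (T₁ ∪ T₂)).card = (G.between S T₁).card + (G.between S T₂).card := by
  have he : G.between S (T₁ ∪ T₂) = G.between S T₁ ∪ G.between S T₂ := by
    unfold LGraph.between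
    ext e
    simp only [Finset.mem_filter, Finset.mem_union]
    tauto
  rw [he, Finset.card_union_of_disjoint]
  rw [Finset.disjoint_left]
  intro e he1 he2
  unfold LGraph.between at he1 he2
  simp only [Finset.mem_filter] at he1 he2
  have d1 := Finset.disjoint_left.mp h1
  have d2 := Finset.disjoint_left.mp h2
  have d3 := Finset.disjoint_left.mp h3
  tauto

lemma connOn_mono (G : LGraph A) {S T : Finset G.V} (hST : S ⊆ T) {x y : G.V}
    (h : Relation.ReflTransGen
      (fun u v => u ∈ S ∧ v ∈ S ∧ ((u, v) ∈ G.edges ∨ (v, u) ∈ G.edges)) x y) :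
    Relation.ReflTransGen
      (fun u v => u ∈ T ∧ v ∈ T ∧ ((u, v) ∈ G.edges ∨ (v, u) ∈ G.edges)) x y :=
  Relation.ReflTransGen.mono (fun u v hr => ⟨hST hr.1, hST hr.2.1, hr.2.2⟩) x y h

lemma connOn_union {G : LGraph A} {S T : Finset G.V}
    (hS : G.ConnOn S) (hT : G.ConnOn T) (h1 : (G.between S T).card = 1) :
    G.ConnOn (S ∪ T) := by
  obtain ⟨e, he⟩ := Finset.card_eq_one.mp h1
  have heB : e ∈ G.between S T := he ▸ Finset.mem_singleton_self e
  rw [LGraph.between, Finset.mem_filter] at heB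
  obtain ⟨heE, hcase⟩ := heB
  refine ⟨hS.1.mono Finset.subset_union_left, ?_⟩
  have pathS : ∀ x ∈ S, ∀ y ∈ S, Relation.ReflTransGen
      (fun u v => u ∈ S ∪ T ∧ v ∈ S ∪ T ∧ ((u, v) ∈ G.edges ∨ (v, u) ∈ G.edges)) x y :=
    fun x hx y hy => connOn_mono G Finset.subset_union_left (hS.2 x hx y hy)
  have pathT : ∀ x ∈ T, ∀ y ∈ T, Relation.ReflTransGen
      (fun u v => u ∈ S ∪ T ∧ v ∈ S ∪ T ∧ ((u, v) ∈ G.edges ∨ (v, u) ∈ G.edges)) x y :=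
    fun x hx y hy => connOn_mono G Finset.subset_union_right (hT.2 x hx y hy)
  rcases hcase with ⟨h1S, h2T⟩ | ⟨h1T, h2S⟩
  · have step12 : Relation.ReflTransGen
        (fun u v => u ∈ S ∪ T ∧ v ∈ S ∪ T ∧ ((u, v) ∈ G.edges ∨ (v, u) ∈ G.edges)) e.1 e.2 :=
      Relation.ReflTransGen.single
        ⟨Finset.mem_union_left _ h1S, Finset.mem_union_right _ h2T, Or.inl heE⟩
    have step21 : Relation.ReflTransGen
        (fun u v => u ∈ S ∪ T ∧ v ∈ S ∪ T ∧ ((u, v) ∈ G.edges ∨ (v, u) ∈ G.edges)) e.2 e.1 :=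
      Relation.ReflTransGen.single
        ⟨Finset.mem_union_right _ h2T, Finset.mem_union_left _ h1S, Or.inr heE⟩
    intro x hx y hy
    rcases Finset.mem_union.mp hx with hx' | hx' <;> rcases Finset.mem_union.mp hy with hy' | hy'
    · exact pathS x hx' y hy'
    · exact ((pathS x hx' e.1 h1S).trans step12).trans (pathT e.2 h2T y hy')
    · exact ((pathT x hx' e.2 h2T).trans step21).trans (pathS e.1 h1S y hy')
    · exact pathT x hx' y hy'
  · have step12 : Relation.ReflTransGen
        (fun u v => u ∈ S ∪ T ∧ v ∈ S ∪ T ∧ ((u, v) ∈ G.edges ∨ (v, u) ∈ G.edges)) e.1 e.2 :=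
      Relation.ReflTransGen.single
        ⟨Finset.mem_union_right _ h1T, Finset.mem_union_left _ h2S, Or.inl heE⟩
    have step21 : Relation.ReflTransGen
        (fun u v => u ∈ S ∪ T ∧ v ∈ S ∪ T ∧ ((u, v) ∈ G.edges ∨ (v, u) ∈ G.edges)) e.2 e.1 :=
      Relation.ReflTransGen.single
        ⟨Finset.mem_union_left _ h2S, Finset.mem_union_right _ h1T, Or.inr heE⟩
    intro x hx y hy
    rcases Finset.mem_union.mp hx with hx' | hx' <;> rcases Finset.mem_union.mp hy with hy' | hy'
    · exact pathS x hx' y hy'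
    · exact ((pathS x hx' e.2 h2S).trans step21).trans (pathT e.1 h1T y hy')
    · exact ((pathT x hx' e.1 h1T).trans step12).trans (pathS e.2 h2S y hy')
    · exact pathT x hx' y hy'

end CP
namespace CP

open LieExpr Finset

variable {A : Type*}

/-! ### goodness decomposition -/

def cond (G : LGraph A) {N : ℕ} (σ : G.V ≃ Fin N) (q : (ℕ × ℕ) × (ℕ × ℕ)) : Prop :=
  G.ConnOn (posSet G σ q.1.1 q.1.2) ∧ G.ConnOn (posSet G σ q.2.1 q.2.2) ∧
    (G.between (posSet G σ q.1.1 q.1.2) (posSet G σ q.2.1 q.2.2)).card = 1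

lemma good_iff (G : LGraph A) (L : LieExpr A) (σ : G.V ≃ Fin L.letters.length) :
    Good G L σ ↔ ∀ q ∈ L.intervals 0, cond G σ q := Iff.rfl

lemma cond_congr {G : LGraph A} {N N' : ℕ} {σ : G.V ≃ Fin N} {σ' : G.V ≃ Fin N'}
    {q r : (ℕ × ℕ) × (ℕ × ℕ)}
    (h1 : posSet G σ' q.1.1 q.1.2 = posSet G σ r.1.1 r.1.2)
    (h2 : posSet G σ' q.2.1 q.2.2 = posSet G σ r.2.1 r.2.2) :
    cond G σ' q ↔ cond G σ r := by
  unfold cond; rw [h1, h2]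

lemma cond_swap {G : LGraph A} {N : ℕ} {σ : G.V ≃ Fin N} (q1 q2 : ℕ × ℕ) :
    cond G σ (q1, q2) ↔ cond G σ (q2, q1) := by
  unfold cond
  rw [between_comm]
  tauto

lemma good_plug (G : LGraph A) (C : Ctx A) (E : LieExpr A)
    (σ : G.V ≃ Fin (C.plug E).letters.length) :
    Good G (C.plug E) σ ↔
      ((∀ q ∈ Ctx.ctxIntervals C E.size 0, cond G σ q) ∧
        (∀ q ∈ E.intervals C.off, cond G σ q)) := by
  rw [good_iff]
  constructor
  · intro h
    constructor
    · intro q hq; exact h q ((Ctx.mem_intervals_plug C E 0 q).mpr (Or.inl hq))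
    · intro q hq
      refine h q ((Ctx.mem_intervals_plug C E 0 q).mpr (Or.inr ?_))
      rwa [zero_add]
  · intro h q hq
    rcases (Ctx.mem_intervals_plug C E 0 q).mp hq with hq' | hq'
    · exact h.1 q hq'
    · exact h.2 q (by rwa [zero_add] at hq')

/-! ### sign lemma -/

lemma prod_ite_neg_one {β : Type*} (s : Finset β) (p : β → Prop) [DecidablePred p] :
    (∏ e ∈ s, if p e then (-1 : ℤ) else 1) = (-1) ^ (s.filter p).card := by
  rw [Finset.prod_ite, Finset.prod_const, Finset.prod_const, one_pow, mul_one]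

section Swap

variable {G : LGraph A} {s a b : ℕ}

lemma pairingAt_swap {L L' : LieExpr A}
    (σ : G.V ≃ Fin L.letters.length)
    (π : Fin L.letters.length ≃ Fin L'.letters.length)
    (hπ : ∀ x : Fin L.letters.length, ((π x : ℕ)) = swapFun s a b (x : ℕ))
    (hGood : Good G L σ) (hGood' : Good G L' (σ.trans π))
    (hcross : (G.between (posSet G σ s a) (posSet G σ (s + a) b)).card = 1) :
    pairingAt G L' (σ.trans π) = - pairingAt G L σ := by
  unfold pairingAt
  rw [if_pos hGood, if_pos hGood']
  have hbtw : G.between (posSet G σ s a) (posSet G σ (s + a) b)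
      = G.edges.filter fun e =>
          ((s ≤ (σ e.1 : ℕ) ∧ (σ e.1 : ℕ) < s + a) ∧ (s + a ≤ (σ e.2 : ℕ) ∧ (σ e.2 : ℕ) < s + a + b)) ∨
          ((s + a ≤ (σ e.1 : ℕ) ∧ (σ e.1 : ℕ) < s + a + b) ∧ (s ≤ (σ e.2 : ℕ) ∧ (σ e.2 : ℕ) < s + a)) := by
    unfold LGraph.between
    refine Finset.filter_congr fun e _ => ?_
    simp only [posSet, Finset.mem_filter, Finset.mem_univ, true_and]
  rw [hbtw] at hcross
  rw [← prod_ite_neg_one, ← prod_ite_neg_one]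
  have expand : (∏ e ∈ G.edges,
      if ((σ.trans π) e.2 : ℕ) < ((σ.trans π) e.1 : ℕ) then (-1 : ℤ) else 1)
      = ∏ e ∈ G.edges,
        ((if (((s ≤ (σ e.1 : ℕ) ∧ (σ e.1 : ℕ) < s + a) ∧ (s + a ≤ (σ e.2 : ℕ) ∧ (σ e.2 : ℕ) < s + a + b)) ∨
          ((s + a ≤ (σ e.1 : ℕ) ∧ (σ e.1 : ℕ) < s + a + b) ∧ (s ≤ (σ e.2 : ℕ) ∧ (σ e.2 : ℕ) < s + a)))
          then (-1 : ℤ) else 1) *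
          (if (σ e.2 : ℕ) < (σ e.1 : ℕ) then (-1 : ℤ) else 1)) := by
    refine Finset.prod_congr rfl fun e he => ?_
    have h1 : (σ e.1 : ℕ) < L.letters.length := (σ e.1).2
    have h2 : (σ e.2 : ℕ) < L.letters.length := (σ e.2).2
    simp only [Equiv.trans_apply, hπ]
    set x := (σ e.1 : ℕ)
    set y := (σ e.2 : ℕ)
    have key : swapFun s a b y < swapFun s a b x ↔
        ((((s ≤ x ∧ x < s + a) ∧ (s + a ≤ y ∧ y < s + a + b)) ∨
          ((s + a ≤ x ∧ x < s + a + b) ∧ (s ≤ y ∧ y < s + a))) ∧ ¬ (y < x)) ∨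
        (¬ (((s ≤ x ∧ x < s + a) ∧ (s + a ≤ y ∧ y < s + a + b)) ∨
          ((s + a ≤ x ∧ x < s + a + b) ∧ (s ≤ y ∧ y < s + a))) ∧ y < x) := by
      simp only [swapFun]
      split_ifs <;> omega
    by_cases hc : (((s ≤ x ∧ x < s + a) ∧ (s + a ≤ y ∧ y < s + a + b)) ∨
          ((s + a ≤ x ∧ x < s + a + b) ∧ (s ≤ y ∧ y < s + a))) <;>
      by_cases hf : y < x <;>
      simp [key, hc, hf]
  rw [expand, Finset.prod_mul_distrib, prod_ite_neg_one, prod_ite_neg_one, hcross]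
  ring

end Swap

/-! ### the transport lemma -/

def transEquiv {G : LGraph A} {N N' : ℕ} (π : Fin N ≃ Fin N') :
    (G.V ≃ Fin N) ≃ (G.V ≃ Fin N') where
  toFun σ := σ.trans π
  invFun τ := τ.trans π.symm
  left_inv σ := by ext v; simp
  right_inv τ := by ext v; simp

lemma transport (G : LGraph A) (L L' : LieExpr A)
    (π : Fin L.letters.length ≃ Fin L'.letters.length)
    (Q : (G.V ≃ Fin L.letters.length) → Prop)
    (Q' : (G.V ≃ Fin L'.letters.length) → Prop)
    [∀ σ, Decidable (Q σ)] [∀ τ, Decidable (Q' τ)]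
    (hlab : ∀ i : Fin L.letters.length, L'.letters.get (π i) = L.letters.get i)
    (hiff : ∀ σ : G.V ≃ Fin L.letters.length,
      (Good G L' (σ.trans π) ∧ Q' (σ.trans π)) ↔ (Good G L σ ∧ Q σ))
    (hsgn : ∀ σ, Good G L σ → Q σ → pairingAt G L' (σ.trans π) = - pairingAt G L σ) :
    (∑ σ ∈ Bijections G L', if Q' σ then pairingAt G L' σ else 0)
      = - ∑ σ ∈ Bijections G L, if Q σ then pairingAt G L σ else 0 := by
  have key : ∀ σ : G.V ≃ Fin L.letters.length,
      (if Q' (σ.trans π) then pairingAt G L' (σ.trans π) else 0)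
        = - (if Q σ then pairingAt G L σ else 0) := by
    intro σ
    by_cases hgq : Good G L σ ∧ Q σ
    · rw [if_pos hgq.2, if_pos ((hiff σ).mpr hgq).2, hsgn σ hgq.1 hgq.2]
    · by_cases hQ : Q σ
      · have hnG : ¬ Good G L σ := fun h => hgq ⟨h, hQ⟩
        rw [if_pos hQ]
        have h0 : pairingAt G L σ = 0 := by unfold pairingAt; rw [if_neg hnG]
        rw [h0, neg_zero]
        by_cases hQ' : Q' (σ.trans π)
        · rw [if_pos hQ']
          have hnG' : ¬ Good G L' (σ.trans π) := fun h => hgq ((hiff σ).mp ⟨h, hQ'⟩)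
          unfold pairingAt; rw [if_neg hnG']
        · rw [if_neg hQ']
      · rw [if_neg hQ, neg_zero]
        by_cases hQ' : Q' (σ.trans π)
        · rw [if_pos hQ']
          have hnG' : ¬ Good G L' (σ.trans π) := fun h => hgq ((hiff σ).mp ⟨h, hQ'⟩)
          unfold pairingAt; rw [if_neg hnG']
        · rw [if_neg hQ']
  have hst : ∀ σ : G.V ≃ Fin L.letters.length,
      σ ∈ Bijections G L ↔ (transEquiv π) σ ∈ Bijections G L' := by
    intro σ
    simp only [Bijections, Finset.mem_filter, Finset.mem_univ, true_and, transEquiv,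
      Equiv.coe_fn_mk, Equiv.trans_apply]
    constructor
    · intro h v; rw [h v, ← hlab (σ v)]
    · intro h v; rw [h v, hlab (σ v)]
  have main : (∑ σ ∈ Bijections G L, - if Q σ then pairingAt G L σ else 0)
      = ∑ τ ∈ Bijections G L', if Q' τ then pairingAt G L' τ else 0 := by
    refine Finset.sum_equiv (transEquiv π) hst fun σ _ => ?_
    exact (key σ).symm
  rw [← main, Finset.sum_neg_distrib]

end CP
namespace CP

open LieExpr Finset

variable {A : Type*}

/-! ### letters under block swap -/

lemma getElem?_swap (pre X Y suf : List A) (i : ℕ) :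
    (pre ++ (Y ++ X) ++ suf)[swapFun pre.length X.length Y.length i]?
      = (pre ++ (X ++ Y) ++ suf)[i]? := by
  by_cases c1 : i < pre.length
  · have hsf : swapFun pre.length X.length Y.length i = i := by
      unfold swapFun; split_ifs <;> omega
    rw [hsf,
      List.getElem?_append_left (l₂ := suf) (by simp [List.length_append]; omega),
      List.getElem?_append_left (l₂ := Y ++ X) (by omega),
      List.getElem?_append_left (l₂ := suf) (by simp [List.length_append]; omega),
      List.getElem?_append_left (l₂ := X ++ Y) (by omega)]
  by_cases c2 : i < pre.length + X.length
  · have hsf : swapFun pre.length X.length Y.length i = i + Y.length := by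
      unfold swapFun; split_ifs <;> omega
    rw [hsf,
      List.getElem?_append_left (l₂ := suf) (by simp [List.length_append]; omega),
      List.getElem?_append_right (l₁ := pre) (by omega),
      List.getElem?_append_right (l₁ := Y) (by omega),
      List.getElem?_append_left (l₂ := suf) (by simp [List.length_append]; omega),
      List.getElem?_append_right (l₁ := pre) (by omega),
      List.getElem?_append_left (l₂ := Y) (by omega)]
    congr 1
    omega
  by_cases c3 : i < pre.length + X.length + Y.length
  · have hsf : swapFun pre.length X.length Y.length i = i - X.length := by
      unfold swapFun; split_ifs <;> omega
    rw [hsf,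
      List.getElem?_append_left (l₂ := suf) (by simp [List.length_append]; omega),
      List.getElem?_append_right (l₁ := pre) (by omega),
      List.getElem?_append_left (l₂ := X) (by omega),
      List.getElem?_append_left (l₂ := suf) (by simp [List.length_append]; omega),
      List.getElem?_append_right (l₁ := pre) (by omega),
      List.getElem?_append_right (l₁ := X) (by omega)]
    congr 1
    omega
  · have hsf : swapFun pre.length X.length Y.length i = i := by
      unfold swapFun; split_ifs <;> omega
    rw [hsf,
      List.getElem?_append_right (l₁ := pre ++ (Y ++ X)) (by simp [List.length_append]; omega),
      List.getElem?_append_right (l₁ := pre ++ (X ++ Y)) (by simp [List.length_append]; omega)]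
    congr 1
    simp [List.length_append]
    omega

lemma letters_get_swap (C : Ctx A) (E E' : LieExpr A) (X Y : List A)
    (hE : E.letters = X ++ Y) (hE' : E'.letters = Y ++ X)
    {a b : ℕ} (ha : X.length = a) (hb : Y.length = b)
    (hN : (C.plug E').letters.length = (C.plug E).letters.length)
    (hle : C.off + a + b ≤ (C.plug E).letters.length)
    (i : Fin (C.plug E).letters.length) :
    (C.plug E').letters.get
        ((swapEquiv C.off a b _ _ hN hle) i) = (C.plug E).letters.get i := by
  have h1 : (C.plug E).letters = C.pre ++ (X ++ Y) ++ C.suf := by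
    rw [Ctx.plug_letters, hE]
  have h2 : (C.plug E').letters = C.pre ++ (Y ++ X) ++ C.suf := by
    rw [Ctx.plug_letters, hE']
  have main : ∀ n : ℕ, (C.plug E').letters[swapFun C.off a b n]? = (C.plug E).letters[n]? := by
    intro n
    rw [h1, h2, ← ha, ← hb, ← Ctx.pre_length]
    exact getElem?_swap C.pre X Y C.suf n
  have hq : (C.plug E').letters[((swapEquiv C.off a b _ _ hN hle) i : ℕ)]?
      = (C.plug E).letters[(i : ℕ)]? := main (i : ℕ)
  rw [List.get_eq_getElem, List.get_eq_getElem]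
  rw [List.getElem?_eq_getElem ((swapEquiv C.off a b _ _ hN hle) i).2, List.getElem?_eq_getElem i.2] at hq
  exact Option.some_injective _ hq

/-! ### transformed interval families -/

section SwapGood

variable {G : LGraph A} {s a b N N' : ℕ} {hN : N' = N} {hle : s + a + b ≤ N}

lemma family_B (σ : G.V ≃ Fin N) (X : LieExpr A) {jL jG : ℕ}
    (h1 : s ≤ jL) (h2 : jL + X.size ≤ s + b) (h3 : jG = jL + a) :
    (∀ q ∈ X.intervals jL, cond G (σ.trans (swapEquiv s a b N N' hN hle)) q)
      ↔ (∀ q ∈ X.intervals jG, cond G σ q) := by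
  subst h3
  have hpt : ∀ q ∈ X.intervals jL,
      (cond G (σ.trans (swapEquiv s a b N N' hN hle)) q ↔ cond G σ (shiftQ a q)) := by
    intro q hq
    have hb := intervals_bounds X jL q hq
    exact cond_congr (posSet_swap_B σ (by omega) (by omega) rfl)
      (posSet_swap_B σ (by omega) (by omega) rfl)
  rw [intervals_shift X jL a]
  constructor
  · intro h q hq
    obtain ⟨q₀, hq₀, rfl⟩ := List.mem_map.mp hq
    exact (hpt q₀ hq₀).mp (h q₀ hq₀)
  · intro h q hq
    exact (hpt q hq).mpr (h _ (List.mem_map_of_mem hq))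

lemma family_A (σ : G.V ≃ Fin N) (X : LieExpr A) {jL jG : ℕ}
    (h1 : s + b ≤ jL) (h2 : jL + X.size ≤ s + a + b) (h3 : jL = jG + b) :
    (∀ q ∈ X.intervals jL, cond G (σ.trans (swapEquiv s a b N N' hN hle)) q)
      ↔ (∀ q ∈ X.intervals jG, cond G σ q) := by
  subst h3
  have hpt : ∀ q ∈ X.intervals jG,
      (cond G (σ.trans (swapEquiv s a b N N' hN hle)) (shiftQ b q) ↔ cond G σ q) := by
    intro q hq
    have hb := intervals_bounds X jG q hq
    have e1 : posSet G (σ.trans (swapEquiv s a b N N' hN hle)) ((shiftQ b q).1.1) ((shiftQ b q).1.2)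
        = posSet G σ q.1.1 q.1.2 := by
      simp only [shiftQ]
      exact posSet_swap_A σ (by omega) (by omega) rfl
    have e2 : posSet G (σ.trans (swapEquiv s a b N N' hN hle)) ((shiftQ b q).2.1) ((shiftQ b q).2.2)
        = posSet G σ q.2.1 q.2.2 := by
      simp only [shiftQ]
      exact posSet_swap_A σ (by omega) (by omega) rfl
    exact cond_congr e1 e2
  rw [intervals_shift X jG b]
  constructor
  · intro h q hq
    exact (hpt q hq).mp (h _ (List.mem_map_of_mem hq))
  · intro h q hq
    obtain ⟨q₀, hq₀, rfl⟩ := List.mem_map.mp hq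
    exact (hpt q₀ hq₀).mpr (h q₀ hq₀)

lemma family_ctx (σ : G.V ≃ Fin N) (C : Ctx A) (n : ℕ) (hn : n = a + b) (hs : s = C.off) :
    (∀ q ∈ Ctx.ctxIntervals C n 0, cond G (σ.trans (swapEquiv s a b N N' hN hle)) q)
      ↔ (∀ q ∈ Ctx.ctxIntervals C n 0, cond G σ q) := by
  refine forall₂_congr fun q hq => ?_
  have hok := Ctx.ctxIntervals_ok C n 0 q hq
  unfold OkItv at hok
  refine cond_congr (posSet_swap_ok σ ?_) (posSet_swap_ok σ ?_) <;>
    (unfold OkItv; omega)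

end SwapGood

end CP
namespace CP

open LieExpr Finset

variable {A : Type*}

theorem anti_ctx (G : LGraph A) (C : Ctx A) (H K : LieExpr A) :
    pairing G (C.plug (.br H K)) + pairing G (C.plug (.br K H)) = 0 := by
  have hoff := Ctx.off_le_csize C
  have hNL : (C.plug (LieExpr.br H K)).letters.length = C.csize + (H.size + K.size) := by
    rw [letters_length, Ctx.size_plug, size_br]
  have hNL' : (C.plug (LieExpr.br K H)).letters.length = C.csize + (K.size + H.size) := by
    rw [letters_length, Ctx.size_plug, size_br]
  have hN : (C.plug (LieExpr.br K H)).letters.length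
      = (C.plug (LieExpr.br H K)).letters.length := by omega
  have hle : C.off + H.size + K.size ≤ (C.plug (LieExpr.br H K)).letters.length := by omega
  set π := swapEquiv C.off H.size K.size _ _ hN hle with hπdef
  have hGiff : ∀ σ : G.V ≃ Fin (C.plug (LieExpr.br H K)).letters.length,
      Good G (C.plug (LieExpr.br K H)) (σ.trans π) ↔ Good G (C.plug (LieExpr.br H K)) σ := by
    intro σ
    rw [good_plug, good_plug]
    have hsize : (LieExpr.br K H).size = (LieExpr.br H K).size := by
      rw [size_br, size_br]; omega
    rw [hsize]
    refine and_congr (family_ctx σ C _ (by rw [size_br]) rfl) ?_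
    show (∀ q ∈ (LieExpr.br K H).intervals C.off, cond G (σ.trans π) q)
      ↔ (∀ q ∈ (LieExpr.br H K).intervals C.off, cond G σ q)
    simp only [LieExpr.intervals, List.forall_mem_cons, List.forall_mem_append]
    have e1 : posSet G (σ.trans π) C.off K.size = posSet G σ (C.off + H.size) K.size :=
      posSet_swap_B σ (le_refl _) (by omega) rfl
    have e2 : posSet G (σ.trans π) (C.off + K.size) H.size = posSet G σ C.off H.size :=
      posSet_swap_A σ (by omega) (by omega) rfl
    have hhead : cond G (σ.trans π) ((C.off, K.size), (C.off + K.size, H.size))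
        ↔ cond G σ ((C.off, H.size), (C.off + H.size, K.size)) :=
      (cond_congr e1 e2).trans (cond_swap _ _)
    have famK : (∀ q ∈ K.intervals C.off, cond G (σ.trans π) q)
        ↔ (∀ q ∈ K.intervals (C.off + H.size), cond G σ q) :=
      family_B σ K (le_refl _) (by omega) rfl
    have famH : (∀ q ∈ H.intervals (C.off + K.size), cond G (σ.trans π) q)
        ↔ (∀ q ∈ H.intervals C.off, cond G σ q) :=
      family_A σ H (by omega) (by omega) rfl
    rw [hhead, famK, famH]
    tauto
  have hlab : ∀ i, (C.plug (LieExpr.br K H)).letters.get (π i)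
      = (C.plug (LieExpr.br H K)).letters.get i :=
    fun i => letters_get_swap C (LieExpr.br H K) (LieExpr.br K H) H.letters K.letters rfl rfl
      (letters_length H) (letters_length K) hN hle i
  have hcross : ∀ σ, Good G (C.plug (LieExpr.br H K)) σ →
      (G.between (posSet G σ C.off H.size) (posSet G σ (C.off + H.size) K.size)).card = 1 := by
    intro σ hσ
    have hfoc := ((good_plug G C _ σ).mp hσ).2
    have hhead := hfoc ((C.off, H.size), (C.off + H.size, K.size))
      (by simp [LieExpr.intervals])
    exact hhead.2.2
  have tr := transport G (C.plug (LieExpr.br H K)) (C.plug (LieExpr.br K H)) π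
    (fun _ => True) (fun _ => True) hlab
    (fun σ => by simp only [and_true]; exact hGiff σ)
    (fun σ hG _ => pairingAt_swap σ π (fun x => rfl) hG ((hGiff σ).mpr hG) (hcross σ hG))
  simp only [if_true] at tr
  show pairing G (C.plug (LieExpr.br H K)) + pairing G (C.plug (LieExpr.br K H)) = 0
  unfold pairing
  rw [tr]
  ring

end CP
namespace CP

open LieExpr Finset

variable {A : Type*}

lemma posSet_congr (G : LGraph A) {N : ℕ} (σ : G.V ≃ Fin N) {st st' : ℕ} (len : ℕ)
    (h : st = st') : posSet G σ st len = posSet G σ st' len := by rw [h]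

lemma pairing_split (G : LGraph A) (L : LieExpr A)
    (Q1 Q2 : (G.V ≃ Fin L.letters.length) → Prop)
    [∀ σ, Decidable (Q1 σ)] [∀ σ, Decidable (Q2 σ)]
    (h : ∀ σ, Good G L σ → (Q1 σ ↔ ¬ Q2 σ)) :
    pairing G L = (∑ σ ∈ Bijections G L, if Q1 σ then pairingAt G L σ else 0)
      + (∑ σ ∈ Bijections G L, if Q2 σ then pairingAt G L σ else 0) := by
  unfold pairing
  rw [← Finset.sum_add_distrib]
  refine Finset.sum_congr rfl fun σ _ => ?_
  by_cases hG : Good G L σ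
  · by_cases h1 : Q1 σ
    · have h2 : ¬ Q2 σ := (h σ hG).mp h1
      rw [if_pos h1, if_neg h2, add_zero]
    · have h2 : Q2 σ := not_not.mp fun hn2 => h1 ((h σ hG).mpr hn2)
      rw [if_neg h1, if_pos h2, zero_add]
  · have h0 : pairingAt G L σ = 0 := by unfold pairingAt; rw [if_neg hG]
    rw [h0]
    split_ifs <;> simp

section Jac

variable (G : LGraph A) (C : Ctx A) (H K M : LieExpr A)

lemma good1_decomp (σ : G.V ≃ Fin (C.plug (.br H (.br K M))).letters.length) :
    Good G (C.plug (.br H (.br K M))) σ ↔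
      ((∀ q ∈ Ctx.ctxIntervals C (H.size + (K.size + M.size)) 0, cond G σ q)
        ∧ cond G σ ((C.off, H.size), (C.off + H.size, K.size + M.size))
        ∧ cond G σ ((C.off + H.size, K.size), (C.off + H.size + K.size, M.size))
        ∧ (∀ q ∈ H.intervals C.off, cond G σ q)
        ∧ (∀ q ∈ K.intervals (C.off + H.size), cond G σ q)
        ∧ (∀ q ∈ M.intervals (C.off + H.size + K.size), cond G σ q)) := by
  rw [good_plug]
  simp only [size_br, LieExpr.intervals, List.forall_mem_cons, List.forall_mem_append]
  tauto

lemma good2_decomp (σ : G.V ≃ Fin (C.plug (.br M (.br H K))).letters.length) :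
    Good G (C.plug (.br M (.br H K))) σ ↔
      ((∀ q ∈ Ctx.ctxIntervals C (M.size + (H.size + K.size)) 0, cond G σ q)
        ∧ cond G σ ((C.off, M.size), (C.off + M.size, H.size + K.size))
        ∧ cond G σ ((C.off + M.size, H.size), (C.off + M.size + H.size, K.size))
        ∧ (∀ q ∈ M.intervals C.off, cond G σ q)
        ∧ (∀ q ∈ H.intervals (C.off + M.size), cond G σ q)
        ∧ (∀ q ∈ K.intervals (C.off + M.size + H.size), cond G σ q)) := by
  rw [good_plug]
  simp only [size_br, LieExpr.intervals, List.forall_mem_cons, List.forall_mem_append]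
  tauto

lemma good3_decomp (σ : G.V ≃ Fin (C.plug (.br K (.br M H))).letters.length) :
    Good G (C.plug (.br K (.br M H))) σ ↔
      ((∀ q ∈ Ctx.ctxIntervals C (K.size + (M.size + H.size)) 0, cond G σ q)
        ∧ cond G σ ((C.off, K.size), (C.off + K.size, M.size + H.size))
        ∧ cond G σ ((C.off + K.size, M.size), (C.off + K.size + M.size, H.size))
        ∧ (∀ q ∈ K.intervals C.off, cond G σ q)
        ∧ (∀ q ∈ M.intervals (C.off + K.size), cond G σ q)
        ∧ (∀ q ∈ H.intervals (C.off + K.size + M.size), cond G σ q)) := by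
  rw [good_plug]
  simp only [size_br, LieExpr.intervals, List.forall_mem_cons, List.forall_mem_append]
  tauto

end Jac

end CP
namespace CP

open LieExpr Finset

variable {A : Type*}

lemma jacA (G : LGraph A) (C : Ctx A) (H K M : LieExpr A) :
    (∑ σ ∈ Bijections G (C.plug (.br M (.br H K))),
        if (G.between (posSet G σ C.off M.size)
            (posSet G σ (C.off + M.size + H.size) K.size)).card = 1
        then pairingAt G (C.plug (.br M (.br H K))) σ else 0)
      = - ∑ σ ∈ Bijections G (C.plug (.br H (.br K M))),
          if (G.between (posSet G σ C.off H.size)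
              (posSet G σ (C.off + H.size) K.size)).card = 1
          then pairingAt G (C.plug (.br H (.br K M))) σ else 0 := by
  have hoff := Ctx.off_le_csize C
  have hN1 : (C.plug (LieExpr.br H (LieExpr.br K M))).letters.length
      = C.csize + (H.size + (K.size + M.size)) := by
    rw [letters_length, Ctx.size_plug]; simp [size_br]
  have hN2 : (C.plug (LieExpr.br M (LieExpr.br H K))).letters.length
      = C.csize + (M.size + (H.size + K.size)) := by
    rw [letters_length, Ctx.size_plug]; simp [size_br]
  have hN21 : (C.plug (LieExpr.br M (LieExpr.br H K))).letters.length
      = (C.plug (LieExpr.br H (LieExpr.br K M))).letters.length := by omega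
  have hle : C.off + (H.size + K.size) + M.size
      ≤ (C.plug (LieExpr.br H (LieExpr.br K M))).letters.length := by omega
  set π := swapEquiv C.off (H.size + K.size) M.size _ _ hN21 hle with hπdef
  have hlab : ∀ i, (C.plug (LieExpr.br M (LieExpr.br H K))).letters.get (π i)
      = (C.plug (LieExpr.br H (LieExpr.br K M))).letters.get i :=
    fun i => letters_get_swap C _ _ (H.letters ++ K.letters) M.letters
      (by simp [LieExpr.letters]) (by simp [LieExpr.letters])
      (by simp [letters_length]) (letters_length M) hN21 hle i
  have hGiff : ∀ σ : G.V ≃ Fin (C.plug (LieExpr.br H (LieExpr.br K M))).letters.length,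
      (Good G (C.plug (LieExpr.br M (LieExpr.br H K))) (σ.trans π) ∧
        (G.between (posSet G (σ.trans π) C.off M.size)
          (posSet G (σ.trans π) (C.off + M.size + H.size) K.size)).card = 1)
      ↔ (Good G (C.plug (LieExpr.br H (LieExpr.br K M))) σ ∧
        (G.between (posSet G σ C.off H.size)
          (posSet G σ (C.off + H.size) K.size)).card = 1) := by
    intro σ
    have tM : posSet G (σ.trans π) C.off M.size
        = posSet G σ (C.off + H.size + K.size) M.size :=
      posSet_swap_B σ (le_refl _) (by omega) (by omega)
    have tHK : posSet G (σ.trans π) (C.off + M.size) (H.size + K.size)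
        = posSet G σ C.off (H.size + K.size) :=
      posSet_swap_A σ (by omega) (by omega) (by omega)
    have tH : posSet G (σ.trans π) (C.off + M.size) H.size = posSet G σ C.off H.size :=
      posSet_swap_A σ (by omega) (by omega) (by omega)
    have tK : posSet G (σ.trans π) (C.off + M.size + H.size) K.size
        = posSet G σ (C.off + H.size) K.size :=
      posSet_swap_A σ (by omega) (by omega) (by omega)
    have famM : (∀ q ∈ M.intervals C.off, cond G (σ.trans π) q)
        ↔ (∀ q ∈ M.intervals (C.off + H.size + K.size), cond G σ q) :=
      family_B σ M (le_refl _) (by omega) (by omega)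
    have famH : (∀ q ∈ H.intervals (C.off + M.size), cond G (σ.trans π) q)
        ↔ (∀ q ∈ H.intervals C.off, cond G σ q) :=
      family_A σ H (by omega) (by omega) (by omega)
    have famK : (∀ q ∈ K.intervals (C.off + M.size + H.size), cond G (σ.trans π) q)
        ↔ (∀ q ∈ K.intervals (C.off + H.size), cond G σ q) :=
      family_A σ K (by omega) (by omega) (by omega)
    have hctx : (∀ q ∈ Ctx.ctxIntervals C (H.size + (K.size + M.size)) 0,
          cond G (σ.trans π) q)
        ↔ (∀ q ∈ Ctx.ctxIntervals C (H.size + (K.size + M.size)) 0, cond G σ q) :=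
      family_ctx σ C _ (by omega) rfl
    rw [good2_decomp, good1_decomp,
      show M.size + (H.size + K.size) = H.size + (K.size + M.size) from by omega,
      famM, famH, famK, hctx]
    simp only [cond]
    rw [tM, tHK, tH, tK]
    have uHK : posSet G σ C.off (H.size + K.size)
        = posSet G σ C.off H.size ∪ posSet G σ (C.off + H.size) K.size :=
      posSet_union G σ _ _ _
    have uKM : posSet G σ (C.off + H.size) (K.size + M.size)
        = posSet G σ (C.off + H.size) K.size ∪ posSet G σ (C.off + H.size + K.size) M.size :=
      posSet_union G σ _ _ _
    rw [uHK, uKM]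
    have dHK : Disjoint (posSet G σ C.off H.size) (posSet G σ (C.off + H.size) K.size) :=
      posSet_disjoint G σ (by omega)
    have dHM : Disjoint (posSet G σ C.off H.size)
        (posSet G σ (C.off + H.size + K.size) M.size) := posSet_disjoint G σ (by omega)
    have dKM : Disjoint (posSet G σ (C.off + H.size) K.size)
        (posSet G σ (C.off + H.size + K.size) M.size) := posSet_disjoint G σ (by omega)
    have dM : (G.between (posSet G σ (C.off + H.size + K.size) M.size)
        (posSet G σ C.off H.size ∪ posSet G σ (C.off + H.size) K.size)).card
        = (G.between (posSet G σ (C.off + H.size + K.size) M.size)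
            (posSet G σ C.off H.size)).card
          + (G.between (posSet G σ (C.off + H.size + K.size) M.size)
              (posSet G σ (C.off + H.size) K.size)).card :=
      between_union_right G dHM.symm dKM.symm dHK
    have dH : (G.between (posSet G σ C.off H.size)
        (posSet G σ (C.off + H.size) K.size
          ∪ posSet G σ (C.off + H.size + K.size) M.size)).card
        = (G.between (posSet G σ C.off H.size) (posSet G σ (C.off + H.size) K.size)).card
          + (G.between (posSet G σ C.off H.size)
              (posSet G σ (C.off + H.size + K.size) M.size)).card :=
      between_union_right G dHK dHM dKM
    have cMH : (G.between (posSet G σ (C.off + H.size + K.size) M.size)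
        (posSet G σ C.off H.size)).card
        = (G.between (posSet G σ C.off H.size)
            (posSet G σ (C.off + H.size + K.size) M.size)).card := by rw [between_comm]
    have cMK : (G.between (posSet G σ (C.off + H.size + K.size) M.size)
        (posSet G σ (C.off + H.size) K.size)).card
        = (G.between (posSet G σ (C.off + H.size) K.size)
            (posSet G σ (C.off + H.size + K.size) M.size)).card := by rw [between_comm]
    constructor
    · rintro ⟨⟨hctx', ⟨c1, c2, c3⟩, ⟨c4, c5, c6⟩, f1, f2, f3⟩, hq⟩
      exact ⟨⟨hctx', ⟨c4, connOn_union c5 c1 (by omega), by omega⟩,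
        ⟨c5, c1, by omega⟩, f2, f3, f1⟩, by omega⟩
    · rintro ⟨⟨hctx', ⟨c1, c2, c3⟩, ⟨c4, c5, c6⟩, f1, f2, f3⟩, hq⟩
      exact ⟨⟨hctx', ⟨c5, connOn_union c1 c4 (by omega), by omega⟩,
        ⟨c1, c4, by omega⟩, f3, f1, f2⟩, by omega⟩
  have hcross : ∀ σ, Good G (C.plug (LieExpr.br H (LieExpr.br K M))) σ →
      (G.between (posSet G σ C.off H.size) (posSet G σ (C.off + H.size) K.size)).card = 1 →
      (G.between (posSet G σ C.off (H.size + K.size))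
        (posSet G σ (C.off + (H.size + K.size)) M.size)).card = 1 := by
    intro σ hG hQ
    obtain ⟨hctx', hA, hB, _, _, _⟩ := (good1_decomp G C H K M σ).mp hG
    simp only [cond] at hA hB
    have c3 := hA.2.2
    have c6 := hB.2.2
    have uKM : posSet G σ (C.off + H.size) (K.size + M.size)
        = posSet G σ (C.off + H.size) K.size ∪ posSet G σ (C.off + H.size + K.size) M.size :=
      posSet_union G σ _ _ _
    rw [uKM] at c3
    have dHK : Disjoint (posSet G σ C.off H.size) (posSet G σ (C.off + H.size) K.size) :=
      posSet_disjoint G σ (by omega)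
    have dHM : Disjoint (posSet G σ C.off H.size)
        (posSet G σ (C.off + H.size + K.size) M.size) := posSet_disjoint G σ (by omega)
    have dKM : Disjoint (posSet G σ (C.off + H.size) K.size)
        (posSet G σ (C.off + H.size + K.size) M.size) := posSet_disjoint G σ (by omega)
    have dH : (G.between (posSet G σ C.off H.size)
        (posSet G σ (C.off + H.size) K.size
          ∪ posSet G σ (C.off + H.size + K.size) M.size)).card
        = (G.between (posSet G σ C.off H.size) (posSet G σ (C.off + H.size) K.size)).card
          + (G.between (posSet G σ C.off H.size)
              (posSet G σ (C.off + H.size + K.size) M.size)).card :=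
      between_union_right G dHK dHM dKM
    have eS : posSet G σ (C.off + (H.size + K.size)) M.size
        = posSet G σ (C.off + H.size + K.size) M.size := posSet_congr G σ _ (by omega)
    have uHK : posSet G σ C.off (H.size + K.size)
        = posSet G σ C.off H.size ∪ posSet G σ (C.off + H.size) K.size :=
      posSet_union G σ _ _ _
    rw [eS, uHK, between_comm]
    have dM : (G.between (posSet G σ (C.off + H.size + K.size) M.size)
        (posSet G σ C.off H.size ∪ posSet G σ (C.off + H.size) K.size)).card
        = (G.between (posSet G σ (C.off + H.size + K.size) M.size)
            (posSet G σ C.off H.size)).card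
          + (G.between (posSet G σ (C.off + H.size + K.size) M.size)
              (posSet G σ (C.off + H.size) K.size)).card :=
      between_union_right G dHM.symm dKM.symm dHK
    have cMH : (G.between (posSet G σ (C.off + H.size + K.size) M.size)
        (posSet G σ C.off H.size)).card
        = (G.between (posSet G σ C.off H.size)
            (posSet G σ (C.off + H.size + K.size) M.size)).card := by rw [between_comm]
    have cMK : (G.between (posSet G σ (C.off + H.size + K.size) M.size)
        (posSet G σ (C.off + H.size) K.size)).card
        = (G.between (posSet G σ (C.off + H.size) K.size)
            (posSet G σ (C.off + H.size + K.size) M.size)).card := by rw [between_comm]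
    omega
  exact transport G _ _ π
    (fun σ => (G.between (posSet G σ C.off H.size)
      (posSet G σ (C.off + H.size) K.size)).card = 1)
    (fun σ => (G.between (posSet G σ C.off M.size)
      (posSet G σ (C.off + M.size + H.size) K.size)).card = 1)
    hlab hGiff
    (fun σ hG hQ => pairingAt_swap σ π (fun x => rfl) hG
      ((hGiff σ).mpr ⟨hG, hQ⟩).1 (hcross σ hG hQ))

end CP
namespace CP

open LieExpr Finset

variable {A : Type*}

lemma jacB (G : LGraph A) (C : Ctx A) (H K M : LieExpr A) :
    (∑ σ ∈ Bijections G (C.plug (.br K (.br M H))),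
        if (G.between (posSet G σ C.off K.size)
            (posSet G σ (C.off + K.size) M.size)).card = 1
        then pairingAt G (C.plug (.br K (.br M H))) σ else 0)
      = - ∑ σ ∈ Bijections G (C.plug (.br H (.br K M))),
          if (G.between (posSet G σ C.off H.size)
              (posSet G σ (C.off + H.size + K.size) M.size)).card = 1
          then pairingAt G (C.plug (.br H (.br K M))) σ else 0 := by
  have hoff := Ctx.off_le_csize C
  have hN1 : (C.plug (LieExpr.br H (LieExpr.br K M))).letters.length
      = C.csize + (H.size + (K.size + M.size)) := by
    rw [letters_length, Ctx.size_plug]; simp [size_br]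
  have hN3 : (C.plug (LieExpr.br K (LieExpr.br M H))).letters.length
      = C.csize + (K.size + (M.size + H.size)) := by
    rw [letters_length, Ctx.size_plug]; simp [size_br]
  have hN31 : (C.plug (LieExpr.br K (LieExpr.br M H))).letters.length
      = (C.plug (LieExpr.br H (LieExpr.br K M))).letters.length := by omega
  have hle : C.off + H.size + (K.size + M.size)
      ≤ (C.plug (LieExpr.br H (LieExpr.br K M))).letters.length := by omega
  set π := swapEquiv C.off H.size (K.size + M.size) _ _ hN31 hle with hπdef
  have hlab : ∀ i, (C.plug (LieExpr.br K (LieExpr.br M H))).letters.get (π i)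
      = (C.plug (LieExpr.br H (LieExpr.br K M))).letters.get i :=
    fun i => letters_get_swap C _ _ H.letters (K.letters ++ M.letters)
      (by simp [LieExpr.letters]) (by simp [LieExpr.letters])
      (letters_length H) (by simp [letters_length]) hN31 hle i
  have hGiff : ∀ σ : G.V ≃ Fin (C.plug (LieExpr.br H (LieExpr.br K M))).letters.length,
      (Good G (C.plug (LieExpr.br K (LieExpr.br M H))) (σ.trans π) ∧
        (G.between (posSet G (σ.trans π) C.off K.size)
          (posSet G (σ.trans π) (C.off + K.size) M.size)).card = 1)
      ↔ (Good G (C.plug (LieExpr.br H (LieExpr.br K M))) σ ∧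
        (G.between (posSet G σ C.off H.size)
          (posSet G σ (C.off + H.size + K.size) M.size)).card = 1) := by
    intro σ
    have tK : posSet G (σ.trans π) C.off K.size = posSet G σ (C.off + H.size) K.size :=
      posSet_swap_B σ (le_refl _) (by omega) (by omega)
    have tM : posSet G (σ.trans π) (C.off + K.size) M.size
        = posSet G σ (C.off + H.size + K.size) M.size :=
      posSet_swap_B σ (by omega) (by omega) (by omega)
    have tH : posSet G (σ.trans π) (C.off + K.size + M.size) H.size
        = posSet G σ C.off H.size :=
      posSet_swap_A σ (by omega) (by omega) (by omega)
    have tMH : posSet G (σ.trans π) (C.off + K.size) (M.size + H.size)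
        = posSet G σ (C.off + H.size + K.size) M.size ∪ posSet G σ C.off H.size := by
      rw [posSet_union, tM, tH]
    have famK : (∀ q ∈ K.intervals C.off, cond G (σ.trans π) q)
        ↔ (∀ q ∈ K.intervals (C.off + H.size), cond G σ q) :=
      family_B σ K (le_refl _) (by omega) (by omega)
    have famM : (∀ q ∈ M.intervals (C.off + K.size), cond G (σ.trans π) q)
        ↔ (∀ q ∈ M.intervals (C.off + H.size + K.size), cond G σ q) :=
      family_B σ M (by omega) (by omega) (by omega)
    have famH : (∀ q ∈ H.intervals (C.off + K.size + M.size), cond G (σ.trans π) q)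
        ↔ (∀ q ∈ H.intervals C.off, cond G σ q) :=
      family_A σ H (by omega) (by omega) (by omega)
    have hctx : (∀ q ∈ Ctx.ctxIntervals C (H.size + (K.size + M.size)) 0,
          cond G (σ.trans π) q)
        ↔ (∀ q ∈ Ctx.ctxIntervals C (H.size + (K.size + M.size)) 0, cond G σ q) :=
      family_ctx σ C _ (by omega) rfl
    rw [good3_decomp, good1_decomp,
      show K.size + (M.size + H.size) = H.size + (K.size + M.size) from by omega,
      famK, famM, famH, hctx]
    simp only [cond]
    rw [tK, tMH, tM, tH]
    have uKM : posSet G σ (C.off + H.size) (K.size + M.size)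
        = posSet G σ (C.off + H.size) K.size ∪ posSet G σ (C.off + H.size + K.size) M.size :=
      posSet_union G σ _ _ _
    rw [uKM]
    have dHK : Disjoint (posSet G σ C.off H.size) (posSet G σ (C.off + H.size) K.size) :=
      posSet_disjoint G σ (by omega)
    have dHM : Disjoint (posSet G σ C.off H.size)
        (posSet G σ (C.off + H.size + K.size) M.size) := posSet_disjoint G σ (by omega)
    have dKM : Disjoint (posSet G σ (C.off + H.size) K.size)
        (posSet G σ (C.off + H.size + K.size) M.size) := posSet_disjoint G σ (by omega)
    have dK3 : (G.between (posSet G σ (C.off + H.size) K.size)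
        (posSet G σ (C.off + H.size + K.size) M.size ∪ posSet G σ C.off H.size)).card
        = (G.between (posSet G σ (C.off + H.size) K.size)
            (posSet G σ (C.off + H.size + K.size) M.size)).card
          + (G.between (posSet G σ (C.off + H.size) K.size) (posSet G σ C.off H.size)).card :=
      between_union_right G dKM dHK.symm dHM.symm
    have dH1 : (G.between (posSet G σ C.off H.size)
        (posSet G σ (C.off + H.size) K.size
          ∪ posSet G σ (C.off + H.size + K.size) M.size)).card
        = (G.between (posSet G σ C.off H.size) (posSet G σ (C.off + H.size) K.size)).card
          + (G.between (posSet G σ C.off H.size)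
              (posSet G σ (C.off + H.size + K.size) M.size)).card :=
      between_union_right G dHK dHM dKM
    have cMH : (G.between (posSet G σ (C.off + H.size + K.size) M.size)
        (posSet G σ C.off H.size)).card
        = (G.between (posSet G σ C.off H.size)
            (posSet G σ (C.off + H.size + K.size) M.size)).card := by rw [between_comm]
    have cKH : (G.between (posSet G σ (C.off + H.size) K.size)
        (posSet G σ C.off H.size)).card
        = (G.between (posSet G σ C.off H.size)
            (posSet G σ (C.off + H.size) K.size)).card := by rw [between_comm]
    constructor
    · rintro ⟨⟨hctx', ⟨c1, c2, c3⟩, ⟨c4, c5, c6⟩, f1, f2, f3⟩, hq⟩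
      exact ⟨⟨hctx', ⟨c5, connOn_union c1 c4 (by omega), by omega⟩,
        ⟨c1, c4, by omega⟩, f3, f1, f2⟩, by omega⟩
    · rintro ⟨⟨hctx', ⟨c1, c2, c3⟩, ⟨c4, c5, c6⟩, f1, f2, f3⟩, hq⟩
      exact ⟨⟨hctx', ⟨c4, connOn_union c5 c1 (by omega), by omega⟩,
        ⟨c5, c1, by omega⟩, f2, f3, f1⟩, by omega⟩
  have hcross : ∀ σ, Good G (C.plug (LieExpr.br H (LieExpr.br K M))) σ →
      (G.between (posSet G σ C.off H.size)
        (posSet G σ (C.off + H.size) (K.size + M.size))).card = 1 := by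
    intro σ hG
    obtain ⟨hctx', hA, hB, _, _, _⟩ := (good1_decomp G C H K M σ).mp hG
    simp only [cond] at hA
    exact hA.2.2
  exact transport G _ _ π
    (fun σ => (G.between (posSet G σ C.off H.size)
      (posSet G σ (C.off + H.size + K.size) M.size)).card = 1)
    (fun σ => (G.between (posSet G σ C.off K.size)
      (posSet G σ (C.off + K.size) M.size)).card = 1)
    hlab hGiff
    (fun σ hG hQ => pairingAt_swap σ π (fun x => rfl) hG
      ((hGiff σ).mpr ⟨hG, hQ⟩).1 (hcross σ hG))

lemma jacC (G : LGraph A) (C : Ctx A) (H K M : LieExpr A) :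
    (∑ σ ∈ Bijections G (C.plug (.br K (.br M H))),
        if (G.between (posSet G σ C.off K.size)
            (posSet G σ (C.off + K.size + M.size) H.size)).card = 1
        then pairingAt G (C.plug (.br K (.br M H))) σ else 0)
      = - ∑ σ ∈ Bijections G (C.plug (.br M (.br H K))),
          if (G.between (posSet G σ C.off M.size)
              (posSet G σ (C.off + M.size) H.size)).card = 1
          then pairingAt G (C.plug (.br M (.br H K))) σ else 0 := by
  have hoff := Ctx.off_le_csize C
  have hN2 : (C.plug (LieExpr.br M (LieExpr.br H K))).letters.length
      = C.csize + (M.size + (H.size + K.size)) := by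
    rw [letters_length, Ctx.size_plug]; simp [size_br]
  have hN3 : (C.plug (LieExpr.br K (LieExpr.br M H))).letters.length
      = C.csize + (K.size + (M.size + H.size)) := by
    rw [letters_length, Ctx.size_plug]; simp [size_br]
  have hN32 : (C.plug (LieExpr.br K (LieExpr.br M H))).letters.length
      = (C.plug (LieExpr.br M (LieExpr.br H K))).letters.length := by omega
  have hle : C.off + (M.size + H.size) + K.size
      ≤ (C.plug (LieExpr.br M (LieExpr.br H K))).letters.length := by omega
  set π := swapEquiv C.off (M.size + H.size) K.size _ _ hN32 hle with hπdef
  have hlab : ∀ i, (C.plug (LieExpr.br K (LieExpr.br M H))).letters.get (π i)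
      = (C.plug (LieExpr.br M (LieExpr.br H K))).letters.get i :=
    fun i => letters_get_swap C _ _ (M.letters ++ H.letters) K.letters
      (by simp [LieExpr.letters]) (by simp [LieExpr.letters])
      (by simp [letters_length]) (letters_length K) hN32 hle i
  have hGiff : ∀ σ : G.V ≃ Fin (C.plug (LieExpr.br M (LieExpr.br H K))).letters.length,
      (Good G (C.plug (LieExpr.br K (LieExpr.br M H))) (σ.trans π) ∧
        (G.between (posSet G (σ.trans π) C.off K.size)
          (posSet G (σ.trans π) (C.off + K.size + M.size) H.size)).card = 1)
      ↔ (Good G (C.plug (LieExpr.br M (LieExpr.br H K))) σ ∧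
        (G.between (posSet G σ C.off M.size)
          (posSet G σ (C.off + M.size) H.size)).card = 1) := by
    intro σ
    have tK : posSet G (σ.trans π) C.off K.size
        = posSet G σ (C.off + M.size + H.size) K.size :=
      posSet_swap_B σ (le_refl _) (by omega) (by omega)
    have tM : posSet G (σ.trans π) (C.off + K.size) M.size = posSet G σ C.off M.size :=
      posSet_swap_A σ (by omega) (by omega) (by omega)
    have tH : posSet G (σ.trans π) (C.off + K.size + M.size) H.size
        = posSet G σ (C.off + M.size) H.size :=
      posSet_swap_A σ (by omega) (by omega) (by omega)
    have tMH : posSet G (σ.trans π) (C.off + K.size) (M.size + H.size)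
        = posSet G σ C.off M.size ∪ posSet G σ (C.off + M.size) H.size := by
      rw [posSet_union, tM, tH]
    have famK : (∀ q ∈ K.intervals C.off, cond G (σ.trans π) q)
        ↔ (∀ q ∈ K.intervals (C.off + M.size + H.size), cond G σ q) :=
      family_B σ K (le_refl _) (by omega) (by omega)
    have famM : (∀ q ∈ M.intervals (C.off + K.size), cond G (σ.trans π) q)
        ↔ (∀ q ∈ M.intervals C.off, cond G σ q) :=
      family_A σ M (by omega) (by omega) (by omega)
    have famH : (∀ q ∈ H.intervals (C.off + K.size + M.size), cond G (σ.trans π) q)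
        ↔ (∀ q ∈ H.intervals (C.off + M.size), cond G σ q) :=
      family_A σ H (by omega) (by omega) (by omega)
    have hctx : (∀ q ∈ Ctx.ctxIntervals C (M.size + (H.size + K.size)) 0,
          cond G (σ.trans π) q)
        ↔ (∀ q ∈ Ctx.ctxIntervals C (M.size + (H.size + K.size)) 0, cond G σ q) :=
      family_ctx σ C _ (by omega) rfl
    rw [good3_decomp, good2_decomp,
      show K.size + (M.size + H.size) = M.size + (H.size + K.size) from by omega,
      famK, famM, famH, hctx]
    simp only [cond]
    rw [tK, tMH, tM, tH]
    have uHK2 : posSet G σ (C.off + M.size) (H.size + K.size)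
        = posSet G σ (C.off + M.size) H.size ∪ posSet G σ (C.off + M.size + H.size) K.size :=
      posSet_union G σ _ _ _
    rw [uHK2]
    have dMH : Disjoint (posSet G σ C.off M.size) (posSet G σ (C.off + M.size) H.size) :=
      posSet_disjoint G σ (by omega)
    have dMK : Disjoint (posSet G σ C.off M.size)
        (posSet G σ (C.off + M.size + H.size) K.size) := posSet_disjoint G σ (by omega)
    have dHK2 : Disjoint (posSet G σ (C.off + M.size) H.size)
        (posSet G σ (C.off + M.size + H.size) K.size) := posSet_disjoint G σ (by omega)
    have dK3 : (G.between (posSet G σ (C.off + M.size + H.size) K.size)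
        (posSet G σ C.off M.size ∪ posSet G σ (C.off + M.size) H.size)).card
        = (G.between (posSet G σ (C.off + M.size + H.size) K.size)
            (posSet G σ C.off M.size)).card
          + (G.between (posSet G σ (C.off + M.size + H.size) K.size)
              (posSet G σ (C.off + M.size) H.size)).card :=
      between_union_right G dMK.symm dHK2.symm dMH
    have dM2 : (G.between (posSet G σ C.off M.size)
        (posSet G σ (C.off + M.size) H.size
          ∪ posSet G σ (C.off + M.size + H.size) K.size)).card
        = (G.between (posSet G σ C.off M.size) (posSet G σ (C.off + M.size) H.size)).card
          + (G.between (posSet G σ C.off M.size)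
              (posSet G σ (C.off + M.size + H.size) K.size)).card :=
      between_union_right G dMH dMK dHK2
    have cKM : (G.between (posSet G σ (C.off + M.size + H.size) K.size)
        (posSet G σ C.off M.size)).card
        = (G.between (posSet G σ C.off M.size)
            (posSet G σ (C.off + M.size + H.size) K.size)).card := by rw [between_comm]
    have cKH : (G.between (posSet G σ (C.off + M.size + H.size) K.size)
        (posSet G σ (C.off + M.size) H.size)).card
        = (G.between (posSet G σ (C.off + M.size) H.size)
            (posSet G σ (C.off + M.size + H.size) K.size)).card := by rw [between_comm]
    constructor
    · rintro ⟨⟨hctx', ⟨c1, c2, c3⟩, ⟨c4, c5, c6⟩, f1, f2, f3⟩, hq⟩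
      exact ⟨⟨hctx', ⟨c4, connOn_union c5 c1 (by omega), by omega⟩,
        ⟨c5, c1, by omega⟩, f2, f3, f1⟩, by omega⟩
    · rintro ⟨⟨hctx', ⟨c1, c2, c3⟩, ⟨c4, c5, c6⟩, f1, f2, f3⟩, hq⟩
      exact ⟨⟨hctx', ⟨c5, connOn_union c1 c4 (by omega), by omega⟩,
        ⟨c1, c4, by omega⟩, f3, f1, f2⟩, by omega⟩
  have hcross : ∀ σ, Good G (C.plug (LieExpr.br M (LieExpr.br H K))) σ →
      (G.between (posSet G σ C.off M.size) (posSet G σ (C.off + M.size) H.size)).card = 1 →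
      (G.between (posSet G σ C.off (M.size + H.size))
        (posSet G σ (C.off + (M.size + H.size)) K.size)).card = 1 := by
    intro σ hG hQ
    obtain ⟨hctx', hA, hB, _, _, _⟩ := (good2_decomp G C H K M σ).mp hG
    simp only [cond] at hA hB
    have c3 := hA.2.2
    have c6 := hB.2.2
    have uHK2 : posSet G σ (C.off + M.size) (H.size + K.size)
        = posSet G σ (C.off + M.size) H.size ∪ posSet G σ (C.off + M.size + H.size) K.size :=
      posSet_union G σ _ _ _
    rw [uHK2] at c3
    have dMH : Disjoint (posSet G σ C.off M.size) (posSet G σ (C.off + M.size) H.size) :=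
      posSet_disjoint G σ (by omega)
    have dMK : Disjoint (posSet G σ C.off M.size)
        (posSet G σ (C.off + M.size + H.size) K.size) := posSet_disjoint G σ (by omega)
    have dHK2 : Disjoint (posSet G σ (C.off + M.size) H.size)
        (posSet G σ (C.off + M.size + H.size) K.size) := posSet_disjoint G σ (by omega)
    have dM2 : (G.between (posSet G σ C.off M.size)
        (posSet G σ (C.off + M.size) H.size
          ∪ posSet G σ (C.off + M.size + H.size) K.size)).card
        = (G.between (posSet G σ C.off M.size) (posSet G σ (C.off + M.size) H.size)).card
          + (G.between (posSet G σ C.off M.size)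
              (posSet G σ (C.off + M.size + H.size) K.size)).card :=
      between_union_right G dMH dMK dHK2
    have eS : posSet G σ (C.off + (M.size + H.size)) K.size
        = posSet G σ (C.off + M.size + H.size) K.size := posSet_congr G σ _ (by omega)
    have uMH : posSet G σ C.off (M.size + H.size)
        = posSet G σ C.off M.size ∪ posSet G σ (C.off + M.size) H.size :=
      posSet_union G σ _ _ _
    rw [eS, uMH, between_comm]
    have dK3 : (G.between (posSet G σ (C.off + M.size + H.size) K.size)
        (posSet G σ C.off M.size ∪ posSet G σ (C.off + M.size) H.size)).card
        = (G.between (posSet G σ (C.off + M.size + H.size) K.size)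
            (posSet G σ C.off M.size)).card
          + (G.between (posSet G σ (C.off + M.size + H.size) K.size)
              (posSet G σ (C.off + M.size) H.size)).card :=
      between_union_right G dMK.symm dHK2.symm dMH
    have cKM : (G.between (posSet G σ (C.off + M.size + H.size) K.size)
        (posSet G σ C.off M.size)).card
        = (G.between (posSet G σ C.off M.size)
            (posSet G σ (C.off + M.size + H.size) K.size)).card := by rw [between_comm]
    have cKH : (G.between (posSet G σ (C.off + M.size + H.size) K.size)
        (posSet G σ (C.off + M.size) H.size)).card
        = (G.between (posSet G σ (C.off + M.size) H.size)
            (posSet G σ (C.off + M.size + H.size) K.size)).card := by rw [between_comm]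
    have cHK : (G.between (posSet G σ (C.off + M.size) H.size)
        (posSet G σ (C.off + M.size + H.size) K.size)).card
        = (G.between (posSet G σ (C.off + M.size + H.size) K.size)
            (posSet G σ (C.off + M.size) H.size)).card := by rw [between_comm]
    omega
  exact transport G _ _ π
    (fun σ => (G.between (posSet G σ C.off M.size)
      (posSet G σ (C.off + M.size) H.size)).card = 1)
    (fun σ => (G.between (posSet G σ C.off K.size)
      (posSet G σ (C.off + K.size + M.size) H.size)).card = 1)
    hlab hGiff
    (fun σ hG hQ => pairingAt_swap σ π (fun x => rfl) hG
      ((hGiff σ).mpr ⟨hG, hQ⟩).1 (hcross σ hG hQ))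

end CP
namespace CP

open LieExpr Finset

variable {A : Type*}

theorem jacobi_ctx (G : LGraph A) (C : Ctx A) (H K M : LieExpr A) :
    pairing G (C.plug (.br H (.br K M))) + pairing G (C.plug (.br M (.br H K)))
      + pairing G (C.plug (.br K (.br M H))) = 0 := by
  have s1 := pairing_split G (C.plug (.br H (.br K M)))
    (fun σ => (G.between (posSet G σ C.off H.size)
      (posSet G σ (C.off + H.size) K.size)).card = 1)
    (fun σ => (G.between (posSet G σ C.off H.size)
      (posSet G σ (C.off + H.size + K.size) M.size)).card = 1)
    (fun σ hG => by
      obtain ⟨_, hA, _, _, _, _⟩ := (good1_decomp G C H K M σ).mp hG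
      simp only [cond] at hA
      have c3 := hA.2.2
      have uKM : posSet G σ (C.off + H.size) (K.size + M.size)
          = posSet G σ (C.off + H.size) K.size
            ∪ posSet G σ (C.off + H.size + K.size) M.size := posSet_union G σ _ _ _
      rw [uKM] at c3
      have dHK : Disjoint (posSet G σ C.off H.size) (posSet G σ (C.off + H.size) K.size) :=
        posSet_disjoint G σ (by omega)
      have dHM : Disjoint (posSet G σ C.off H.size)
          (posSet G σ (C.off + H.size + K.size) M.size) := posSet_disjoint G σ (by omega)
      have dKM : Disjoint (posSet G σ (C.off + H.size) K.size)
          (posSet G σ (C.off + H.size + K.size) M.size) := posSet_disjoint G σ (by omega)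
      have dH : (G.between (posSet G σ C.off H.size)
          (posSet G σ (C.off + H.size) K.size
            ∪ posSet G σ (C.off + H.size + K.size) M.size)).card
          = (G.between (posSet G σ C.off H.size)
              (posSet G σ (C.off + H.size) K.size)).card
            + (G.between (posSet G σ C.off H.size)
                (posSet G σ (C.off + H.size + K.size) M.size)).card :=
        between_union_right G dHK dHM dKM
      omega)
  have s2 := pairing_split G (C.plug (.br M (.br H K)))
    (fun σ => (G.between (posSet G σ C.off M.size)
      (posSet G σ (C.off + M.size + H.size) K.size)).card = 1)
    (fun σ => (G.between (posSet G σ C.off M.size)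
      (posSet G σ (C.off + M.size) H.size)).card = 1)
    (fun σ hG => by
      obtain ⟨_, hA, _, _, _, _⟩ := (good2_decomp G C H K M σ).mp hG
      simp only [cond] at hA
      have c3 := hA.2.2
      have uHK2 : posSet G σ (C.off + M.size) (H.size + K.size)
          = posSet G σ (C.off + M.size) H.size
            ∪ posSet G σ (C.off + M.size + H.size) K.size := posSet_union G σ _ _ _
      rw [uHK2] at c3
      have dMH : Disjoint (posSet G σ C.off M.size) (posSet G σ (C.off + M.size) H.size) :=
        posSet_disjoint G σ (by omega)
      have dMK : Disjoint (posSet G σ C.off M.size)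
          (posSet G σ (C.off + M.size + H.size) K.size) := posSet_disjoint G σ (by omega)
      have dHK2 : Disjoint (posSet G σ (C.off + M.size) H.size)
          (posSet G σ (C.off + M.size + H.size) K.size) := posSet_disjoint G σ (by omega)
      have dM2 : (G.between (posSet G σ C.off M.size)
          (posSet G σ (C.off + M.size) H.size
            ∪ posSet G σ (C.off + M.size + H.size) K.size)).card
          = (G.between (posSet G σ C.off M.size)
              (posSet G σ (C.off + M.size) H.size)).card
            + (G.between (posSet G σ C.off M.size)
                (posSet G σ (C.off + M.size + H.size) K.size)).card :=
        between_union_right G dMH dMK dHK2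
      omega)
  have s3 := pairing_split G (C.plug (.br K (.br M H)))
    (fun σ => (G.between (posSet G σ C.off K.size)
      (posSet G σ (C.off + K.size) M.size)).card = 1)
    (fun σ => (G.between (posSet G σ C.off K.size)
      (posSet G σ (C.off + K.size + M.size) H.size)).card = 1)
    (fun σ hG => by
      obtain ⟨_, hA, _, _, _, _⟩ := (good3_decomp G C H K M σ).mp hG
      simp only [cond] at hA
      have c3 := hA.2.2
      have uMH3 : posSet G σ (C.off + K.size) (M.size + H.size)
          = posSet G σ (C.off + K.size) M.size
            ∪ posSet G σ (C.off + K.size + M.size) H.size := posSet_union G σ _ _ _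
      rw [uMH3] at c3
      have dKM3 : Disjoint (posSet G σ C.off K.size) (posSet G σ (C.off + K.size) M.size) :=
        posSet_disjoint G σ (by omega)
      have dKH3 : Disjoint (posSet G σ C.off K.size)
          (posSet G σ (C.off + K.size + M.size) H.size) := posSet_disjoint G σ (by omega)
      have dMH3 : Disjoint (posSet G σ (C.off + K.size) M.size)
          (posSet G σ (C.off + K.size + M.size) H.size) := posSet_disjoint G σ (by omega)
      have dK : (G.between (posSet G σ C.off K.size)
          (posSet G σ (C.off + K.size) M.size
            ∪ posSet G σ (C.off + K.size + M.size) H.size)).card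
          = (G.between (posSet G σ C.off K.size)
              (posSet G σ (C.off + K.size) M.size)).card
            + (G.between (posSet G σ C.off K.size)
                (posSet G σ (C.off + K.size + M.size) H.size)).card :=
        between_union_right G dKM3 dKH3 dMH3
      omega)
  have trA := jacA G C H K M
  have trB := jacB G C H K M
  have trC := jacC G C H K M
  linarith

theorem leibniz_ctx (G : LGraph A) (C : Ctx A) (a b c : LieExpr A) :
    pairing G (C.plug (.br a (.br b c)))
      = pairing G (C.plug (.br (.br a b) c)) + pairing G (C.plug (.br b (.br a c))) := by
  have j := jacobi_ctx G C a b c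
  have h1 := anti_ctx G C c (.br a b)
  have h2 : pairing G (C.plug (.br b (.br c a))) + pairing G (C.plug (.br b (.br a c))) = 0 := by
    have h := anti_ctx G (C.comp (Ctx.brR b Ctx.hole)) c a
    rw [Ctx.plug_comp, Ctx.plug_comp] at h
    simpa [Ctx.plug] using h
  linarith

end CP
namespace CP

open LieExpr

variable {A : Type*}

def toMagma : LieExpr A → FreeMagma A
  | .of a => FreeMagma.of a
  | .br h k => toMagma h * toMagma k

def toExpr : FreeMagma A → LieExpr A
  | .of a => .of a
  | .mul x y => .br (toExpr x) (toExpr y)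

lemma toExpr_toMagma (L : LieExpr A) : toExpr (toMagma L) = L := by
  induction L with
  | of a => rfl
  | br h k ih1 ih2 =>
      show LieExpr.br (toExpr (toMagma h)) (toExpr (toMagma k)) = _
      rw [ih1, ih2]

lemma toMagma_toExpr (w : FreeMagma A) : toMagma (toExpr w) = w := by
  induction w with
  | ih1 a => rfl
  | ih2 x y ih1 ih2 =>
      show toMagma (toExpr x) * toMagma (toExpr y) = _
      rw [ih1, ih2]

lemma myInduction {p : FreeNonUnitalNonAssocAlgebra ℚ A → Prop}
    (x : FreeNonUnitalNonAssocAlgebra ℚ A) (h0 : p 0)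
    (hadd : ∀ f g : FreeNonUnitalNonAssocAlgebra ℚ A, p f → p g → p (f + g))
    (hsingle : ∀ (w : FreeMagma A) (c : ℚ), p (MonoidAlgebra.single w c)) : p x :=
  MonoidAlgebra.induction_linear x h0 hadd hsingle

noncomputable def F0 (p : FreeMagma A → ℚ) (x : FreeNonUnitalNonAssocAlgebra ℚ A) : ℚ :=
  Finsupp.sum x.coeff fun w r => r * p w

lemma F0_add (p : FreeMagma A → ℚ) (x y : FreeNonUnitalNonAssocAlgebra ℚ A) :
    F0 p (x + y) = F0 p x + F0 p y :=
  Finsupp.sum_add_index' (by simp) (by intros; ring)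

lemma F0_single (p : FreeMagma A → ℚ) (w : FreeMagma A) (c : ℚ) :
    F0 p (MonoidAlgebra.single w c) = c * p w :=
  Finsupp.sum_single_index (by simp)

lemma F0_zero (p : FreeMagma A → ℚ) : F0 p 0 = 0 := by
  simp [F0]

lemma F0_smul (p : FreeMagma A → ℚ) (q : ℚ) (x : FreeNonUnitalNonAssocAlgebra ℚ A) :
    F0 p (q • x) = q * F0 p x := by
  induction x using myInduction with
  | h0 => rw [smul_zero, F0_zero]; ring
  | hadd f g hf hg => rw [smul_add, F0_add, hf, hg, F0_add]; ring
  | hsingle w c =>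
      rw [show q • (MonoidAlgebra.single w c : FreeNonUnitalNonAssocAlgebra ℚ A)
          = MonoidAlgebra.single w (q * c) from MonoidAlgebra.smul_single' q w c,
        F0_single, F0_single]
      ring

noncomputable def FF (p : FreeMagma A → ℚ) : FreeNonUnitalNonAssocAlgebra ℚ A →ₗ[ℚ] ℚ where
  toFun := F0 p
  map_add' := F0_add p
  map_smul' := F0_smul p

/-- Generators of the Lie relations submodule. -/
def gens : Set (FreeNonUnitalNonAssocAlgebra ℚ A) :=
  {x | ∃ (C : Ctx A) (u v : LieExpr A),
      x = MonoidAlgebra.single (toMagma (C.plug (.br u v))) 1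
        + MonoidAlgebra.single (toMagma (C.plug (.br v u))) 1}
  ∪ {x | ∃ (C : Ctx A) (u v w : LieExpr A),
      x = MonoidAlgebra.single (toMagma (C.plug (.br u (.br v w)))) 1
        - MonoidAlgebra.single (toMagma (C.plug (.br (.br u v) w))) 1
        - MonoidAlgebra.single (toMagma (C.plug (.br v (.br u w)))) 1}

noncomputable def J : Submodule ℚ (FreeNonUnitalNonAssocAlgebra ℚ A) :=
  Submodule.span ℚ gens

lemma single_mul_toMagma (y : FreeMagma A) (L : LieExpr A) :
    (MonoidAlgebra.single y (1 : ℚ)) * MonoidAlgebra.single (toMagma L) (1 : ℚ)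
      = MonoidAlgebra.single (toMagma (LieExpr.br (toExpr y) L)) 1 := by
  rw [MonoidAlgebra.single_mul_single, one_mul]
  show _ = MonoidAlgebra.single (toMagma (toExpr y) * toMagma L) 1
  rw [toMagma_toExpr]

lemma toMagma_mul_single (y : FreeMagma A) (L : LieExpr A) :
    MonoidAlgebra.single (toMagma L) (1 : ℚ) * (MonoidAlgebra.single y (1 : ℚ))
      = MonoidAlgebra.single (toMagma (LieExpr.br L (toExpr y))) 1 := by
  rw [MonoidAlgebra.single_mul_single, one_mul]
  show _ = MonoidAlgebra.single (toMagma L * toMagma (toExpr y)) 1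
  rw [toMagma_toExpr]

lemma gen_mul_left (y : FreeMagma A) {x : FreeNonUnitalNonAssocAlgebra ℚ A} (hx : x ∈ gens) :
    (MonoidAlgebra.single y (1 : ℚ)) * x ∈ (gens : Set (FreeNonUnitalNonAssocAlgebra ℚ A)) := by
  rcases hx with ⟨C, u, v, rfl⟩ | ⟨C, u, v, w, rfl⟩
  · refine Or.inl ⟨Ctx.brR (toExpr y) C, u, v, ?_⟩
    rw [mul_add, single_mul_toMagma, single_mul_toMagma]
    rfl
  · refine Or.inr ⟨Ctx.brR (toExpr y) C, u, v, w, ?_⟩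
    rw [mul_sub, mul_sub, single_mul_toMagma, single_mul_toMagma, single_mul_toMagma]
    rfl

lemma gen_mul_right (y : FreeMagma A) {x : FreeNonUnitalNonAssocAlgebra ℚ A} (hx : x ∈ gens) :
    x * (MonoidAlgebra.single y (1 : ℚ)) ∈ (gens : Set (FreeNonUnitalNonAssocAlgebra ℚ A)) := by
  rcases hx with ⟨C, u, v, rfl⟩ | ⟨C, u, v, w, rfl⟩
  · refine Or.inl ⟨Ctx.brL C (toExpr y), u, v, ?_⟩
    rw [add_mul, toMagma_mul_single, toMagma_mul_single]
    rfl
  · refine Or.inr ⟨Ctx.brL C (toExpr y), u, v, w, ?_⟩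
    rw [sub_mul, sub_mul, toMagma_mul_single, toMagma_mul_single, toMagma_mul_single]
    rfl

lemma mul_left_mem_J (a : FreeNonUnitalNonAssocAlgebra ℚ A)
    {x : FreeNonUnitalNonAssocAlgebra ℚ A} (hx : x ∈ (J : Submodule ℚ _)) :
    a * x ∈ (J : Submodule ℚ _) := by
  induction hx using Submodule.span_induction with
  | mem g hg =>
      induction a using myInduction with
      | h0 => rw [zero_mul]; exact (J).zero_mem
      | hadd f f' hf hf' => rw [add_mul]; exact Submodule.add_mem _ hf hf'
      | hsingle y c =>
          rw [show (MonoidAlgebra.single y c : FreeNonUnitalNonAssocAlgebra ℚ A)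
              = c • MonoidAlgebra.single y (1 : ℚ) from by
            rw [MonoidAlgebra.smul_single', mul_one], smul_mul_assoc]
          exact Submodule.smul_mem _ _ (Submodule.subset_span (gen_mul_left y hg))
  | zero => rw [mul_zero]; exact (J).zero_mem
  | add x y _ _ hx hy => rw [mul_add]; exact Submodule.add_mem _ hx hy
  | smul t x _ hx => rw [mul_smul_comm]; exact Submodule.smul_mem _ _ hx

lemma mul_right_mem_J (a : FreeNonUnitalNonAssocAlgebra ℚ A)
    {x : FreeNonUnitalNonAssocAlgebra ℚ A} (hx : x ∈ (J : Submodule ℚ _)) :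
    x * a ∈ (J : Submodule ℚ _) := by
  induction hx using Submodule.span_induction with
  | mem g hg =>
      induction a using myInduction with
      | h0 => rw [mul_zero]; exact (J).zero_mem
      | hadd f f' hf hf' => rw [mul_add]; exact Submodule.add_mem _ hf hf'
      | hsingle y c =>
          rw [show (MonoidAlgebra.single y c : FreeNonUnitalNonAssocAlgebra ℚ A)
              = c • MonoidAlgebra.single y (1 : ℚ) from by
            rw [MonoidAlgebra.smul_single', mul_one], mul_smul_comm]
          exact Submodule.smul_mem _ _ (Submodule.subset_span (gen_mul_right y hg))
  | zero => rw [zero_mul]; exact (J).zero_mem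
  | add x y _ _ hx hy => rw [add_mul]; exact Submodule.add_mem _ hx hy
  | smul t x _ hx => rw [smul_mul_assoc]; exact Submodule.smul_mem _ _ hx

lemma pol_mem (x y : FreeNonUnitalNonAssocAlgebra ℚ A) :
    x * y + y * x ∈ (J : Submodule ℚ _) := by
  induction x using myInduction with
  | h0 => rw [zero_mul, mul_zero, add_zero]; exact (J).zero_mem
  | hadd f g hf hg =>
      have e : (f + g) * y + y * (f + g)
          = (f * y + y * f) + (g * y + y * g) := by
        rw [add_mul, mul_add]; abel
      rw [e]; exact Submodule.add_mem _ hf hg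
  | hsingle w c =>
      induction y using myInduction with
      | h0 => rw [zero_mul, mul_zero, add_zero]; exact (J).zero_mem
      | hadd f g hf hg =>
          have e : (MonoidAlgebra.single w c : FreeNonUnitalNonAssocAlgebra ℚ A) * (f + g)
              + (f + g) * MonoidAlgebra.single w c
              = (MonoidAlgebra.single w c * f + f * MonoidAlgebra.single w c)
                + (MonoidAlgebra.single w c * g + g * MonoidAlgebra.single w c) := by
            rw [add_mul, mul_add]; abel
          rw [e]; exact Submodule.add_mem _ hf hg
      | hsingle w' c' =>
          have e : (MonoidAlgebra.single w c : FreeNonUnitalNonAssocAlgebra ℚ A)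
                * MonoidAlgebra.single w' c'
              + MonoidAlgebra.single w' c' * MonoidAlgebra.single w c
              = (c * c') • (MonoidAlgebra.single (w * w') (1 : ℚ)
                  + MonoidAlgebra.single (w' * w) (1 : ℚ)) := by
            rw [MonoidAlgebra.single_mul_single, MonoidAlgebra.single_mul_single,
              smul_add, MonoidAlgebra.smul_single', MonoidAlgebra.smul_single',
              mul_one, mul_comm c' c]
          rw [e]
          refine Submodule.smul_mem _ _ (Submodule.subset_span (Or.inl
            ⟨Ctx.hole, toExpr w, toExpr w', ?_⟩))
          show _ = MonoidAlgebra.single (toMagma (toExpr w) * toMagma (toExpr w')) 1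
            + MonoidAlgebra.single (toMagma (toExpr w') * toMagma (toExpr w)) 1
          rw [toMagma_toExpr, toMagma_toExpr]

lemma sq_mem (a : FreeNonUnitalNonAssocAlgebra ℚ A) : a * a ∈ (J : Submodule ℚ _) := by
  have h2 : a * a + a * a ∈ (J : Submodule ℚ _) := pol_mem a a
  have e : a * a = (2⁻¹ : ℚ) • (a * a + a * a) := by
    rw [← two_smul ℚ (a * a), smul_smul]
    norm_num
  rw [e]
  exact Submodule.smul_mem _ _ h2

lemma leib_mem (a b c : FreeNonUnitalNonAssocAlgebra ℚ A) :
    a * (b * c) - (a * b * c + b * (a * c)) ∈ (J : Submodule ℚ _) := by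
  induction a using myInduction with
  | h0 =>
      simp only [zero_mul, mul_zero, add_zero, zero_add, sub_self, sub_zero, zero_sub, neg_zero]
      exact (J).zero_mem
  | hadd f g hf hg =>
      have e : (f + g) * (b * c) - ((f + g) * b * c + b * ((f + g) * c))
          = (f * (b * c) - (f * b * c + b * (f * c)))
            + (g * (b * c) - (g * b * c + b * (g * c))) := by
        simp only [add_mul, mul_add]; abel
      rw [e]; exact Submodule.add_mem _ hf hg
  | hsingle w₁ c₁ =>
    induction b using myInduction with
    | h0 =>
        simp only [zero_mul, mul_zero, add_zero, zero_add, sub_self, sub_zero, zero_sub,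
          neg_zero]
        exact (J).zero_mem
    | hadd f g hf hg =>
        have e : (MonoidAlgebra.single w₁ c₁ : FreeNonUnitalNonAssocAlgebra ℚ A) * ((f + g) * c)
              - (MonoidAlgebra.single w₁ c₁ * (f + g) * c
                + (f + g) * (MonoidAlgebra.single w₁ c₁ * c))
            = (MonoidAlgebra.single w₁ c₁ * (f * c)
                - (MonoidAlgebra.single w₁ c₁ * f * c + f * (MonoidAlgebra.single w₁ c₁ * c)))
              + (MonoidAlgebra.single w₁ c₁ * (g * c)
                - (MonoidAlgebra.single w₁ c₁ * g * c + g * (MonoidAlgebra.single w₁ c₁ * c))) := by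
          simp only [add_mul, mul_add]; abel
        rw [e]; exact Submodule.add_mem _ hf hg
    | hsingle w₂ c₂ =>
      induction c using myInduction with
      | h0 =>
          simp only [zero_mul, mul_zero, add_zero, zero_add, sub_self, sub_zero, zero_sub,
            neg_zero]
          exact (J).zero_mem
      | hadd f g hf hg =>
          have e : (MonoidAlgebra.single w₁ c₁ : FreeNonUnitalNonAssocAlgebra ℚ A)
                * (MonoidAlgebra.single w₂ c₂ * (f + g))
              - (MonoidAlgebra.single w₁ c₁ * MonoidAlgebra.single w₂ c₂ * (f + g)
                + MonoidAlgebra.single w₂ c₂ * (MonoidAlgebra.single w₁ c₁ * (f + g)))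
              = (MonoidAlgebra.single w₁ c₁ * (MonoidAlgebra.single w₂ c₂ * f)
                  - (MonoidAlgebra.single w₁ c₁ * MonoidAlgebra.single w₂ c₂ * f
                    + MonoidAlgebra.single w₂ c₂ * (MonoidAlgebra.single w₁ c₁ * f)))
                + (MonoidAlgebra.single w₁ c₁ * (MonoidAlgebra.single w₂ c₂ * g)
                  - (MonoidAlgebra.single w₁ c₁ * MonoidAlgebra.single w₂ c₂ * g
                    + MonoidAlgebra.single w₂ c₂ * (MonoidAlgebra.single w₁ c₁ * g))) := by
            simp only [add_mul, mul_add]; abel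
          rw [e]; exact Submodule.add_mem _ hf hg
      | hsingle w₃ c₃ =>
          have s1 : (MonoidAlgebra.single w₁ c₁ : FreeNonUnitalNonAssocAlgebra ℚ A)
              * (MonoidAlgebra.single w₂ c₂ * MonoidAlgebra.single w₃ c₃)
              = MonoidAlgebra.single (w₁ * (w₂ * w₃)) (c₁ * (c₂ * c₃)) := by
            rw [MonoidAlgebra.single_mul_single, MonoidAlgebra.single_mul_single]
          have s2 : (MonoidAlgebra.single w₁ c₁ : FreeNonUnitalNonAssocAlgebra ℚ A)
              * MonoidAlgebra.single w₂ c₂ * MonoidAlgebra.single w₃ c₃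
              = MonoidAlgebra.single ((w₁ * w₂) * w₃) (c₁ * (c₂ * c₃)) := by
            rw [MonoidAlgebra.single_mul_single, MonoidAlgebra.single_mul_single,
              show (c₁ * c₂) * c₃ = c₁ * (c₂ * c₃) from by ring]
          have s3 : (MonoidAlgebra.single w₂ c₂ : FreeNonUnitalNonAssocAlgebra ℚ A)
              * (MonoidAlgebra.single w₁ c₁ * MonoidAlgebra.single w₃ c₃)
              = MonoidAlgebra.single (w₂ * (w₁ * w₃)) (c₁ * (c₂ * c₃)) := by
            rw [MonoidAlgebra.single_mul_single, MonoidAlgebra.single_mul_single,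
              show c₂ * (c₁ * c₃) = c₁ * (c₂ * c₃) from by ring]
          have e : (MonoidAlgebra.single w₁ c₁ : FreeNonUnitalNonAssocAlgebra ℚ A)
              * (MonoidAlgebra.single w₂ c₂ * MonoidAlgebra.single w₃ c₃)
              - (MonoidAlgebra.single w₁ c₁ * MonoidAlgebra.single w₂ c₂
                  * MonoidAlgebra.single w₃ c₃
                + MonoidAlgebra.single w₂ c₂
                  * (MonoidAlgebra.single w₁ c₁ * MonoidAlgebra.single w₃ c₃))
              = (c₁ * (c₂ * c₃)) • (MonoidAlgebra.single (w₁ * (w₂ * w₃)) (1 : ℚ)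
                  - MonoidAlgebra.single ((w₁ * w₂) * w₃) (1 : ℚ)
                  - MonoidAlgebra.single (w₂ * (w₁ * w₃)) (1 : ℚ)) := by
            rw [s1, s2, s3, smul_sub, smul_sub, MonoidAlgebra.smul_single',
              MonoidAlgebra.smul_single', MonoidAlgebra.smul_single', mul_one,
              sub_add_eq_sub_sub]
          rw [e]
          refine Submodule.smul_mem _ _ (Submodule.subset_span (Or.inr
            ⟨Ctx.hole, toExpr w₁, toExpr w₂, toExpr w₃, ?_⟩))
          show _ = MonoidAlgebra.single (toMagma (toExpr w₁)
              * (toMagma (toExpr w₂) * toMagma (toExpr w₃))) 1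
            - MonoidAlgebra.single ((toMagma (toExpr w₁) * toMagma (toExpr w₂))
              * toMagma (toExpr w₃)) 1
            - MonoidAlgebra.single (toMagma (toExpr w₂)
              * (toMagma (toExpr w₁) * toMagma (toExpr w₃))) 1
          rw [toMagma_toExpr, toMagma_toExpr, toMagma_toExpr]

end CP
namespace CP

open LieExpr

variable {A : Type*}

lemma F_gens (G : LGraph A) {x : FreeNonUnitalNonAssocAlgebra ℚ A}
    (hx : x ∈ (gens : Set (FreeNonUnitalNonAssocAlgebra ℚ A))) :
    FF (fun w => (pairing G (toExpr w) : ℚ)) x = 0 := by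
  rcases hx with ⟨C, u, v, rfl⟩ | ⟨C, u, v, w, rfl⟩
  · have h := anti_ctx G C u v
    have e : FF (fun w => (pairing G (toExpr w) : ℚ))
        (MonoidAlgebra.single (toMagma (C.plug (.br u v))) 1
          + MonoidAlgebra.single (toMagma (C.plug (.br v u))) 1)
        = (pairing G (C.plug (.br u v)) : ℚ) + (pairing G (C.plug (.br v u)) : ℚ) := by
      rw [map_add]
      show F0 _ _ + F0 _ _ = _
      rw [F0_single, F0_single, toExpr_toMagma, toExpr_toMagma, one_mul, one_mul]
    rw [e]
    exact_mod_cast h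
  · have h := leibniz_ctx G C u v w
    have e : FF (fun w => (pairing G (toExpr w) : ℚ))
        (MonoidAlgebra.single (toMagma (C.plug (.br u (.br v w)))) 1
          - MonoidAlgebra.single (toMagma (C.plug (.br (.br u v) w))) 1
          - MonoidAlgebra.single (toMagma (C.plug (.br v (.br u w)))) 1)
        = (pairing G (C.plug (.br u (.br v w))) : ℚ)
          - (pairing G (C.plug (.br (.br u v) w)) : ℚ)
          - (pairing G (C.plug (.br v (.br u w))) : ℚ) := by
      rw [map_sub, map_sub]
      show F0 _ _ - F0 _ _ - F0 _ _ = _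
      rw [F0_single, F0_single, F0_single, toExpr_toMagma, toExpr_toMagma, toExpr_toMagma,
        one_mul, one_mul, one_mul]
    rw [e]
    have h' : (pairing G (C.plug (.br u (.br v w))) : ℚ)
        = (pairing G (C.plug (.br (.br u v) w)) : ℚ)
          + (pairing G (C.plug (.br v (.br u w))) : ℚ) := by exact_mod_cast h
    linarith

lemma F_J (G : LGraph A) {x : FreeNonUnitalNonAssocAlgebra ℚ A}
    (hx : x ∈ (J : Submodule ℚ (FreeNonUnitalNonAssocAlgebra ℚ A))) :
    FF (fun w => (pairing G (toExpr w) : ℚ)) x = 0 := by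
  induction hx using Submodule.span_induction with
  | mem g hg => exact F_gens G hg
  | zero => exact map_zero _
  | add x y _ _ hx hy => rw [map_add, hx, hy, add_zero]
  | smul t x _ hx => rw [map_smul, hx, smul_zero]

lemma rel_sub_mem {x y : FreeNonUnitalNonAssocAlgebra ℚ A}
    (h : FreeLieAlgebra.Rel ℚ A x y) :
    x - y ∈ (J : Submodule ℚ (FreeNonUnitalNonAssocAlgebra ℚ A)) := by
  induction h with
  | lie_self a => rw [sub_zero]; exact sq_mem a
  | leibniz_lie a b c => exact leib_mem a b c
  | smul t _ ih => rw [← smul_sub]; exact Submodule.smul_mem _ _ ih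
  | add_right c _ ih => rw [add_sub_add_right_eq_sub]; exact ih
  | mul_left a _ ih => rw [← mul_sub]; exact mul_left_mem_J a ih
  | mul_right c _ ih => rw [← sub_mul]; exact mul_right_mem_J c ih

lemma toLie_mk (L : LieExpr A) :
    L.toLie = Quot.mk (FreeLieAlgebra.Rel ℚ A) (MonoidAlgebra.single (toMagma L) 1) := by
  induction L with
  | of a => rfl
  | br h k ih1 ih2 =>
      show ⁅h.toLie, k.toLie⁆ = _
      rw [ih1, ih2]
      show Quot.mk (FreeLieAlgebra.Rel ℚ A)
        (MonoidAlgebra.single (toMagma h) 1 * MonoidAlgebra.single (toMagma k) 1) = _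
      rw [MonoidAlgebra.single_mul_single, one_mul]
      rfl

end CP


/-- **The configuration pairing vanishes on the Lie relations**: for every finite directed
labeled graph `G`, the pairing `⟨G, −⟩` vanishes on anti-commutativity and Jacobi
combinations of Lie bracket expressions; consequently it induces a well-defined linear
functional on the free Lie algebra on the alphabet. -/
theorem pairing_liftsToFreeLie {A : Type*} (G : LGraph A) :
    (∀ H K : LieExpr A, pairing G (.br H K) + pairing G (.br K H) = 0) ∧
    (∀ H K M : LieExpr A,
      pairing G (.br H (.br K M)) + pairing G (.br M (.br H K)) +
        pairing G (.br K (.br M H)) = 0) ∧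
    ∃ φ : FreeLieAlgebra ℚ A →ₗ[ℚ] ℚ,
      ∀ L : LieExpr A, φ L.toLie = (pairing G L : ℚ) := by
  refine ⟨fun H K => CP.anti_ctx G CP.Ctx.hole H K,
    fun H K M => CP.jacobi_ctx G CP.Ctx.hole H K M, ?_⟩
  have hrel : ∀ x y, FreeLieAlgebra.Rel ℚ A x y →
      CP.FF (fun w => (pairing G (CP.toExpr w) : ℚ)) x
        = CP.FF (fun w => (pairing G (CP.toExpr w) : ℚ)) y := by
    intro x y h
    have h0 := CP.F_J G (CP.rel_sub_mem h)
    rw [map_sub] at h0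
    linarith
  refine ⟨{ toFun := fun x => Quot.liftOn x (CP.FF (fun w => (pairing G (CP.toExpr w) : ℚ))) hrel,
            map_add' := ?_, map_smul' := ?_ }, fun L => ?_⟩
  · intro x y
    obtain ⟨a⟩ := x
    obtain ⟨b⟩ := y
    exact map_add (CP.FF (fun w => (pairing G (CP.toExpr w) : ℚ))) a b
  · intro q x
    obtain ⟨a⟩ := x
    simp only [RingHom.id_apply]
    exact map_smul (CP.FF (fun w => (pairing G (CP.toExpr w) : ℚ))) q a
  · show Quot.liftOn L.toLie _ hrel = _
    rw [CP.toLie_mk]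
    show CP.F0 (fun w => (pairing G (CP.toExpr w) : ℚ))
      (MonoidAlgebra.single (CP.toMagma L) 1) = _
    rw [CP.F0_single, CP.toExpr_toMagma, one_mul]
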